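/- arXiv:2502.06564 — 3 statements merged into one kernel-verified Lean document; each statement's English description precedes it below -/
import Mathlib

section
/- Let Σ, Σ', Σ̂ ∈ ℝ^{d×d} be positive definite matrices such that, for some Δ ≤ 1, ‖Σ^{-1/2} Σ' Σ^{-1/2} − Id‖_F ≤ Δ and ‖(Σ')^{-1/2} Σ̂ (Σ')^{-1/2} − Id‖_F ≤ Δ. Then ‖Σ^{-1/2} Σ̂ Σ^{-1/2} − Id‖_F ≤ 3Δ. The same implication holds when the Frobenius norm ‖·‖_F is replaced throughout by the spectral (operator) norm ‖·‖. -/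
open MeasureTheory ProbabilityTheory Matrix Finset Real Filter

noncomputable section

namespace Paper

variable {d n : ℕ}

/-- Spectral (operator) norm of a matrix. -/
def specNorm (A : Matrix (Fin d) (Fin d) ℝ) : ℝ :=
  ‖LinearMap.toContinuousLinearMap (Matrix.toEuclideanLin A)‖

/-- Frobenius norm of a matrix. -/
def frobNorm (A : Matrix (Fin d) (Fin d) ℝ) : ℝ :=
  Real.sqrt (∑ i, ∑ j, (A i j) ^ 2)

/-- Effective rank. -/
def erk (A : Matrix (Fin d) (Fin d) ℝ) : ℝ := A.trace / specNorm A

open Classical in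
/-- Positive semidefinite square root (junk value `0` if not psd). -/
def matSqrt (A : Matrix (Fin d) (Fin d) ℝ) : Matrix (Fin d) (Fin d) ℝ :=
  if h : A.PosSemidef then (h.1.eigenvectorUnitary : Matrix (Fin d) (Fin d) ℝ) *
    diagonal ((↑) ∘ (√·) ∘ h.1.eigenvalues) * (star h.1.eigenvectorUnitary : Matrix (Fin d) (Fin d) ℝ)
  else 0

/-- Inverse of the positive semidefinite square root. -/
def invSqrt (A : Matrix (Fin d) (Fin d) ℝ) : Matrix (Fin d) (Fin d) ℝ := (matSqrt A)⁻¹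

/-- Standard Gaussian measure on ℝ^d. -/
def stdGaussian (d : ℕ) : Measure (Fin d → ℝ) :=
  Measure.pi fun _ => gaussianReal 0 1

/-- Centered Gaussian measure with covariance S. -/
def gaussianOf (S : Matrix (Fin d) (Fin d) ℝ) : Measure (Fin d → ℝ) :=
  (stdGaussian d).map (matSqrt S).mulVec

/-- Spatial sign (projection on the sphere of radius √d). -/
def spSign (d : ℕ) (x : Fin d → ℝ) : Fin d → ℝ :=
  fun i => Real.sqrt d * x i / Real.sqrt (∑ j, (x j) ^ 2)

/-- Truncated spatial sign with threshold Δ. -/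
def truncSign (d : ℕ) (Δ : ℝ) (x : Fin d → ℝ) : Fin d → ℝ :=
  if (∑ i, (x i) ^ 2) < (d : ℝ) - Δ then fun i => Real.sqrt ((d : ℝ) / ((d : ℝ) - Δ)) * x i
  else if (d : ℝ) + Δ < (∑ i, (x i) ^ 2) then fun i => Real.sqrt ((d : ℝ) / ((d : ℝ) + Δ)) * x i
  else spSign d x

/-- Mean vector of a measure on ℝ^d. -/
def meanVec (μ : Measure (Fin d → ℝ)) : Fin d → ℝ := fun i => ∫ x, x i ∂μ

/-- Covariance matrix of a measure on ℝ^d. -/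
def covMatrix (μ : Measure (Fin d → ℝ)) : Matrix (Fin d) (Fin d) ℝ :=
  Matrix.of fun i j => ∫ x, (x i - meanVec μ i) * (x j - meanVec μ j) ∂μ

/-- Inner product of vectors indexed by `ι`. -/
def inner1 {ι : Type*} [Fintype ι] (v x : ι → ℝ) : ℝ := ∑ j, v j * x j

/-- Inner product of "matrices" indexed by `ι × ι`. -/
def innerM {ι : Type*} [Fintype ι] (P Q : ι → ι → ℝ) : ℝ := ∑ j, ∑ k, P j k * Q j k

/-- Outer product. -/
def outer {ι : Type*} (x y : ι → ℝ) : ι → ι → ℝ := fun j k => x j * y k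

/-- sup_{v ∈ V} ⟨v, a⟩². -/
def supInner {ι : Type*} [Fintype ι] (V : Set (ι → ℝ)) (a : ι → ℝ) : ℝ :=
  sSup ((fun v => (inner1 v a) ^ 2) '' V)

/-- Generalized stability (Definition 4 of the paper). -/
def IsStable {ι : Type*} [Fintype ι] (x : Fin n → ι → ℝ) (ε δ r : ℝ)
    (V : Set (ι → ℝ)) (P : Set (ι → ι → ℝ)) (μ : ι → ℝ) (Q : ι → ι → ℝ) : Prop :=
  ∀ v ∈ V, ∀ p ∈ P, ∀ M : Finset (Fin n), (1 - ε) * (n : ℝ) ≤ (M.card : ℝ) →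
    |(M.card : ℝ)⁻¹ * ∑ i ∈ M, inner1 v (fun j => x i j - μ j)| ≤ δ ∧
    |(M.card : ℝ)⁻¹ * ∑ i ∈ M, innerM p (outer (fun j => x i j - μ j) (fun j => x i j - μ j))
        - innerM p Q| ≤ δ ^ 2 / ε ∧
    |innerM p Q| ≤ r ^ 2

/-- 𝒱 ⊗ 𝒱 ⊆ 𝒫. -/
def TensorSub {ι : Type*} (V : Set (ι → ℝ)) (P : Set (ι → ι → ℝ)) : Prop :=
  ∀ v ∈ V, ∀ v' ∈ V, outer v v' ∈ P

/-- Adequacy of 𝒫 with respect to 𝒱. -/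
def Adequate {ι : Type*} [Fintype ι] (V : Set (ι → ℝ)) (P : Set (ι → ι → ℝ)) : Prop :=
  (∀ a : ι → ℝ, ∀ p ∈ P, 0 ≤ innerM p (outer a a)) ∧
  (∀ a b : ι → ℝ, ∀ p ∈ P, (innerM p (outer a b)) ^ 2 ≤ supInner V a * supInner V b)

/-- The weight set 𝒲_ε. -/
def weightSet (n : ℕ) (ε : ℝ) : Set (Fin n → ℝ) :=
  {w | (∀ i, 0 ≤ w i ∧ w i ≤ 1 / (n : ℝ)) ∧ 1 - ε ≤ ∑ i, w i}

/-- Weighted mean μ_w. -/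
def wMean {ι : Type*} (w : Fin n → ℝ) (x : Fin n → ι → ℝ) : ι → ℝ :=
  fun j => (∑ i, w i)⁻¹ * ∑ i, w i * x i j

/-- Weighted covariance Σ_w. -/
def wCov {ι : Type*} (w : Fin n → ℝ) (x : Fin n → ι → ℝ) : ι → ι → ℝ :=
  fun j k => (∑ i, w i)⁻¹ * ∑ i, w i * (x i j - wMean w x j) * (x i k - wMean w x k)

/-- A d×d matrix viewed as a vector in ℝ^{d²}. -/
def mvec (A : Matrix (Fin d) (Fin d) ℝ) : Fin d × Fin d → ℝ := fun p => A p.1 p.2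

/-- Id_d as a vector in ℝ^{d²}. -/
def idVec (d : ℕ) : Fin d × Fin d → ℝ := fun p => if p.1 = p.2 then 1 else 0

/-- 2·Id_{d²}. -/
def twoId (d : ℕ) : (Fin d × Fin d) → (Fin d × Fin d) → ℝ :=
  fun p q => if p = q then 2 else 0

/-- The Frobenius-norm ball ℬ_R (as vectors in ℝ^{d²}). -/
def ballF (d : ℕ) (R : ℝ) : Set (Fin d × Fin d → ℝ) :=
  {V | ∑ p : Fin d × Fin d, (V p) ^ 2 ≤ R ^ 2}

/-- ℬ_R ⊗ ℬ_R. -/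
def ballFT (d : ℕ) (R : ℝ) : Set ((Fin d × Fin d) → (Fin d × Fin d) → ℝ) :=
  {P | ∃ V ∈ ballF d R, ∃ W ∈ ballF d R, P = outer V W}

/-- 𝒮_R = {uuᵀ : ‖u‖ ≤ √R}. -/
def sphereSet (d : ℕ) (R : ℝ) : Set (Fin d × Fin d → ℝ) :=
  {V | ∃ u : Fin d → ℝ, (∑ i, (u i) ^ 2) ≤ R ∧ V = fun p => u p.1 * u p.2}

/-- 𝒫_R: the set of degree-4 pseudo-expectation moment matrices Ẽ[v^{⊗4}]
under the constraint ‖v‖² ≤ R. -/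
def pseudoSet (d : ℕ) (R : ℝ) : Set ((Fin d × Fin d) → (Fin d × Fin d) → ℝ) :=
  {P | ∃ L : MvPolynomial (Fin d) ℝ →ₗ[ℝ] ℝ,
    L 1 = 1 ∧
    (∀ q : MvPolynomial (Fin d) ℝ, q.totalDegree ≤ 2 → 0 ≤ L (q ^ 2)) ∧
    (∀ q : MvPolynomial (Fin d) ℝ, q.totalDegree ≤ 1 →
      0 ≤ L ((MvPolynomial.C R - ∑ i, MvPolynomial.X i ^ 2) * q ^ 2)) ∧
    P = fun p q => L (MvPolynomial.X p.1 * MvPolynomial.X p.2 *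
        MvPolynomial.X q.1 * MvPolynomial.X q.2)}

/-- The Hanson–Wright property of a distribution ρ with mean μv and covariance S. -/
def HansonWright (ρ : Measure (Fin d → ℝ)) (μv : Fin d → ℝ)
    (S : Matrix (Fin d) (Fin d) ℝ) (CHW : ℝ) : Prop :=
  ∀ A : Matrix (Fin d) (Fin d) ℝ, ∀ t : ℝ, 0 < t →
    ρ {x | t ≤ |(∑ j, ∑ k, ((invSqrt S).mulVec (fun l => x l - μv l)) j * A j k *
        ((invSqrt S).mulVec (fun l => x l - μv l)) k) - A.trace|}
      ≤ ENNReal.ofReal (2 * Real.exp (-(1 / CHW) *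
          min (t ^ 2 / (frobNorm A) ^ 2) (t / specNorm A)))

/-- ε-corruption of an indexed family of points. -/
def Corruption {α : Type*} (n : ℕ) (ε : ℝ) (x y : Fin n → α) : Prop :=
  ∃ G : Finset (Fin n), (1 - ε) * (n : ℝ) ≤ (G.card : ℝ) ∧ ∀ i ∈ G, x i = y i

/-- Entries of the 4-tensor E[(xxᵀ − Id)^{⊗2}] of a measure μ on ℝ^d. -/
def tensorEnt (μ : Measure (Fin d → ℝ)) (i1 i2 i3 i4 : Fin d) : ℝ :=
  ∫ x, (x i1 * x i2 - if i1 = i2 then (1 : ℝ) else 0) *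
       (x i3 * x i4 - if i3 = i4 then (1 : ℝ) else 0) ∂μ

/-- E[(xxᵀ − Id)^{⊗2}] as a d²×d² matrix. -/
def tensorQ (μ : Measure (Fin d → ℝ)) : (Fin d × Fin d) → (Fin d × Fin d) → ℝ :=
  fun p q => tensorEnt μ p.1 p.2 q.1 q.2




section AuxNormLemmas

section NormLemmas

open scoped Matrix.Norms.L2Operator

lemma specNorm_eq_norm (A : Matrix (Fin d) (Fin d) ℝ) : specNorm A = ‖A‖ := rfl

lemma conjT_eq_transpose (A : Matrix (Fin d) (Fin d) ℝ) : Aᴴ = Aᵀ := by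
  ext i j; simp [Matrix.conjTranspose_apply]

lemma specNorm_nonneg (A : Matrix (Fin d) (Fin d) ℝ) : 0 ≤ specNorm A := by
  rw [specNorm_eq_norm]; exact norm_nonneg _

lemma specNorm_transpose (A : Matrix (Fin d) (Fin d) ℝ) : specNorm Aᵀ = specNorm A := by
  rw [specNorm_eq_norm, specNorm_eq_norm, ← conjT_eq_transpose, Matrix.l2_opNorm_conjTranspose]

lemma specNorm_mul_le (A B : Matrix (Fin d) (Fin d) ℝ) :
    specNorm (A * B) ≤ specNorm A * specNorm B := by
  simpa only [specNorm_eq_norm] using Matrix.l2_opNorm_mul A B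

lemma specNorm_add_le (A B : Matrix (Fin d) (Fin d) ℝ) :
    specNorm (A + B) ≤ specNorm A + specNorm B := by
  simpa only [specNorm_eq_norm] using norm_add_le A B

lemma specNorm_mul_transpose_self (M : Matrix (Fin d) (Fin d) ℝ) :
    specNorm (M * Mᵀ) = specNorm M * specNorm M := by
  have := Matrix.l2_opNorm_conjTranspose_mul_self Mᵀ
  rw [conjT_eq_transpose, Matrix.transpose_transpose] at this
  rw [specNorm_eq_norm, this, ← specNorm_eq_norm, specNorm_transpose]

lemma specNorm_one_le : specNorm (1 : Matrix (Fin d) (Fin d) ℝ) ≤ 1 := by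
  have h1 : specNorm (1 : Matrix (Fin d) (Fin d) ℝ)
      = ‖(toEuclideanCLM (n := Fin d) (𝕜 := ℝ)) 1‖ := rfl
  rw [h1, _root_.map_one, ContinuousLinearMap.one_def]
  exact ContinuousLinearMap.norm_id_le

lemma euclid_norm_eq (v : Fin d → ℝ) :
    ‖((WithLp.equiv 2 (Fin d → ℝ)).symm v : EuclideanSpace ℝ (Fin d))‖
      = Real.sqrt (∑ j, (v j) ^ 2) := by
  rw [EuclideanSpace.norm_eq]
  congr 1
  refine Finset.sum_congr rfl fun j _ => ?_
  simp [Real.norm_eq_abs, sq_abs]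

lemma spec_mulVec (A : Matrix (Fin d) (Fin d) ℝ) (v : Fin d → ℝ) :
    Real.sqrt (∑ i, (A.mulVec v i) ^ 2) ≤ specNorm A * Real.sqrt (∑ j, (v j) ^ 2) := by
  have h := Matrix.l2_opNorm_mulVec A ((WithLp.equiv 2 (Fin d → ℝ)).symm v)
  rw [euclid_norm_eq] at h
  have h2 : ‖((EuclideanSpace.equiv (Fin d) ℝ).symm (A *ᵥ ((WithLp.equiv 2 (Fin d → ℝ))
      ((WithLp.equiv 2 (Fin d → ℝ)).symm v))) : EuclideanSpace ℝ (Fin d))‖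
      = Real.sqrt (∑ i, (A.mulVec v i) ^ 2) := by
    rw [Equiv.apply_symm_apply]
    exact euclid_norm_eq _
  rw [← specNorm_eq_norm] at h
  calc Real.sqrt (∑ i, (A.mulVec v i) ^ 2) = _ := h2.symm
  _ ≤ _ := h

end NormLemmas

lemma frobNorm_nonneg (A : Matrix (Fin d) (Fin d) ℝ) : 0 ≤ frobNorm A := Real.sqrt_nonneg _

lemma frobNorm_sq_nonneg (A : Matrix (Fin d) (Fin d) ℝ) : 0 ≤ ∑ i, ∑ j, (A i j) ^ 2 :=
  Finset.sum_nonneg fun _ _ => Finset.sum_nonneg fun _ _ => sq_nonneg _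

lemma frobNorm_eq_norm (A : Matrix (Fin d) (Fin d) ℝ) :
    frobNorm A = ‖((WithLp.equiv 2 ((Fin d × Fin d) → ℝ)).symm (fun p => A p.1 p.2) :
      EuclideanSpace ℝ (Fin d × Fin d))‖ := by
  rw [EuclideanSpace.norm_eq, frobNorm]
  congr 1
  rw [Fintype.sum_prod_type]
  refine Finset.sum_congr rfl fun i _ => Finset.sum_congr rfl fun j _ => ?_
  simp [Real.norm_eq_abs, sq_abs]

lemma frobNorm_transpose (A : Matrix (Fin d) (Fin d) ℝ) : frobNorm Aᵀ = frobNorm A := by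
  rw [frobNorm, frobNorm, Finset.sum_comm]
  rfl

lemma frobNorm_add_le (A B : Matrix (Fin d) (Fin d) ℝ) :
    frobNorm (A + B) ≤ frobNorm A + frobNorm B := by
  rw [frobNorm_eq_norm, frobNorm_eq_norm, frobNorm_eq_norm]
  have : ((WithLp.equiv 2 ((Fin d × Fin d) → ℝ)).symm (fun p => (A + B) p.1 p.2) :
      EuclideanSpace ℝ (Fin d × Fin d))
      = (WithLp.equiv 2 ((Fin d × Fin d) → ℝ)).symm (fun p => A p.1 p.2)
        + (WithLp.equiv 2 ((Fin d × Fin d) → ℝ)).symm (fun p => B p.1 p.2) := by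
    ext p
    simp [Matrix.add_apply]
  rw [this]
  exact norm_add_le _ _

lemma specNorm_le_frobNorm (A : Matrix (Fin d) (Fin d) ℝ) : specNorm A ≤ frobNorm A := by
  refine ContinuousLinearMap.opNorm_le_bound _ (frobNorm_nonneg A) fun x => ?_
  have hx : x = (WithLp.equiv 2 (Fin d → ℝ)).symm (WithLp.equiv 2 (Fin d → ℝ) x) := rfl
  set v : Fin d → ℝ := WithLp.equiv 2 (Fin d → ℝ) x with hv
  have h1 : ‖(LinearMap.toContinuousLinearMap (Matrix.toEuclideanLin A)) x‖
      = Real.sqrt (∑ i, (A.mulVec v i) ^ 2) := by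
    show ‖(Matrix.toEuclideanLin A) x‖ = _
    rw [hx, Matrix.toEuclideanLin_apply_piLp_toLp, EuclideanSpace.norm_eq]
    congr 1
    exact Finset.sum_congr rfl fun i _ => by simp [Real.norm_eq_abs, sq_abs]
  have h2 : ‖x‖ = Real.sqrt (∑ j, (v j) ^ 2) := by
    rw [hx, EuclideanSpace.norm_eq]
    congr 1
    exact Finset.sum_congr rfl fun i _ => by simp [Real.norm_eq_abs, sq_abs]
  rw [h1, h2]
  -- ∑ i (A.mulVec v i)^2 ≤ (∑∑ A²)(∑ v²)
  have hb : ∑ i, (A.mulVec v i) ^ 2 ≤ (∑ i, ∑ j, (A i j) ^ 2) * (∑ j, (v j) ^ 2) := by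
    rw [Finset.sum_mul]
    refine Finset.sum_le_sum fun i _ => ?_
    exact Finset.sum_mul_sq_le_sq_mul_sq Finset.univ (fun j => A i j) v
  calc Real.sqrt (∑ i, (A.mulVec v i) ^ 2)
      ≤ Real.sqrt ((∑ i, ∑ j, (A i j) ^ 2) * (∑ j, (v j) ^ 2)) := Real.sqrt_le_sqrt hb
    _ = frobNorm A * Real.sqrt (∑ j, (v j) ^ 2) := by
        rw [Real.sqrt_mul (frobNorm_sq_nonneg A)]; rfl

lemma frobNorm_mul_le_spec (M X : Matrix (Fin d) (Fin d) ℝ) :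
    frobNorm (M * X) ≤ specNorm M * frobNorm X := by
  have key : ∑ i, ∑ j, ((M * X) i j) ^ 2
      ≤ specNorm M ^ 2 * ∑ i, ∑ j, (X i j) ^ 2 := by
    rw [Finset.sum_comm, Finset.sum_comm (f := fun i j => (X i j) ^ 2), Finset.mul_sum]
    refine Finset.sum_le_sum fun j _ => ?_
    have hcol : ∀ i, (M * X) i j = M.mulVec (fun k => X k j) i := by
      intro i; simp [Matrix.mul_apply, Matrix.mulVec, dotProduct]
    have h := spec_mulVec M (fun k => X k j)
    have e : ∑ i, ((M * X) i j) ^ 2 = ∑ i, (M.mulVec (fun k => X k j) i) ^ 2 :=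
      Finset.sum_congr rfl fun i _ => by rw [hcol]
    rw [e]
    have hub := pow_le_pow_left₀ (Real.sqrt_nonneg _) h 2
    rw [Real.sq_sqrt (Finset.sum_nonneg fun _ _ => sq_nonneg _), mul_pow,
      Real.sq_sqrt (Finset.sum_nonneg fun _ _ => sq_nonneg _)] at hub
    exact hub
  calc frobNorm (M * X) = Real.sqrt (∑ i, ∑ j, ((M * X) i j) ^ 2) := rfl
    _ ≤ Real.sqrt (specNorm M ^ 2 * ∑ i, ∑ j, (X i j) ^ 2) := Real.sqrt_le_sqrt key
    _ = specNorm M * frobNorm X := by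
        rw [Real.sqrt_mul (sq_nonneg _), Real.sqrt_sq (specNorm_nonneg M)]; rfl

lemma frobNorm_mul_le_spec' (X M : Matrix (Fin d) (Fin d) ℝ) :
    frobNorm (X * M) ≤ frobNorm X * specNorm M := by
  have : frobNorm (X * M) = frobNorm (Mᵀ * Xᵀ) := by
    rw [← Matrix.transpose_mul, frobNorm_transpose]
  rw [this]
  calc frobNorm (Mᵀ * Xᵀ) ≤ specNorm Mᵀ * frobNorm Xᵀ := frobNorm_mul_le_spec _ _
    _ = frobNorm X * specNorm M := by rw [specNorm_transpose, frobNorm_transpose, mul_comm]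


lemma sqrt_facts {S : Matrix (Fin d) (Fin d) ℝ} (hS : S.PosDef) :
    matSqrt S * matSqrt S = S ∧ (matSqrt S)ᵀ = matSqrt S ∧ IsUnit (matSqrt S).det ∧
      (invSqrt S)ᵀ = invSqrt S := by
  have hps := hS.posSemidef
  have hdef : matSqrt S = (hps.1.eigenvectorUnitary : Matrix (Fin d) (Fin d) ℝ) *
      diagonal ((↑) ∘ (√·) ∘ hps.1.eigenvalues) *
      (star hps.1.eigenvectorUnitary : Matrix (Fin d) (Fin d) ℝ) := by rw [matSqrt, dif_pos hps]
  have hU : (star hps.1.eigenvectorUnitary : Matrix (Fin d) (Fin d) ℝ) *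
      (hps.1.eigenvectorUnitary : Matrix (Fin d) (Fin d) ℝ) = 1 :=
    Unitary.coe_star_mul_self _
  have h1 : matSqrt S * matSqrt S = S := by
    rw [hdef]
    conv_rhs => rw [hps.1.spectral_theorem]
    simp only [Matrix.mul_assoc]
    rw [← Matrix.mul_assoc _ (hps.1.eigenvectorUnitary : Matrix (Fin d) (Fin d) ℝ), hU,
      Matrix.one_mul, ← Matrix.mul_assoc (diagonal _), diagonal_mul_diagonal]
    simp only [Unitary.conjStarAlgAut_apply, Matrix.mul_assoc]
    congr 3
    funext i
    simp [Real.mul_self_sqrt (hps.eigenvalues_nonneg i)]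
  have h2 : (matSqrt S)ᵀ = matSqrt S := by
    rw [← conjT_eq_transpose, hdef]
    simp [Matrix.conjTranspose_mul, Matrix.star_eq_conjTranspose, Matrix.mul_assoc]
  have h3 : IsUnit (matSqrt S).det := by
    rw [isUnit_iff_ne_zero]
    intro h0
    have : S.det = 0 := by rw [← h1, Matrix.det_mul, h0, mul_zero]
    exact absurd this (ne_of_gt hS.det_pos)
  refine ⟨h1, h2, h3, ?_⟩
  rw [invSqrt, Matrix.transpose_nonsing_inv, h2]

lemma key_bound (N : ∀ {m : ℕ}, Matrix (Fin m) (Fin m) ℝ → ℝ)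
    (hNadd : ∀ X Y : Matrix (Fin d) (Fin d) ℝ, N (X + Y) ≤ N X + N Y)
    (hMul : ∀ M X : Matrix (Fin d) (Fin d) ℝ, N (M * X * Mᵀ) ≤ specNorm (M * Mᵀ) * N X)
    (hSpecLe : ∀ X : Matrix (Fin d) (Fin d) ℝ, specNorm X ≤ N X)
    (S S' Sh : Matrix (Fin d) (Fin d) ℝ)
    (hS : S.PosDef) (hS' : S'.PosDef) (hSh : Sh.PosDef) (Δ : ℝ) (hΔ : Δ ≤ 1)
    (h1 : N (invSqrt S * S' * invSqrt S - 1) ≤ Δ)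
    (h2 : N (invSqrt S' * Sh * invSqrt S' - 1) ≤ Δ) :
    N (invSqrt S * Sh * invSqrt S - 1) ≤ 3 * Δ := by
  obtain ⟨hPP, hPt, hPdet, hRt⟩ := sqrt_facts hS
  obtain ⟨hQQ, hQt, hQdet, hR't⟩ := sqrt_facts hS'
  set P := matSqrt S
  set Q := matSqrt S'
  set R := invSqrt S with hRdef
  set R' := invSqrt S' with hR'def
  have hΔ0 : 0 ≤ Δ := le_trans (le_trans (specNorm_nonneg _) (hSpecLe _)) h1
  have hQR' : Q * R' = 1 := Matrix.mul_nonsing_inv Q hQdet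
  have hR'Q : R' * Q = 1 := Matrix.nonsing_inv_mul Q hQdet
  set M : Matrix (Fin d) (Fin d) ℝ := R * Q with hM
  have hMt : Mᵀ = Q * R := by rw [hM, Matrix.transpose_mul, hQt, hRt]
  have hMMt : M * Mᵀ = R * S' * R := by
    rw [hM, hMt]
    simp only [Matrix.mul_assoc]
    rw [← Matrix.mul_assoc Q Q R, hQQ]
  have hviaB : M * (R' * Sh * R') * Mᵀ = R * Sh * R := by
    rw [hM, hMt]
    simp only [Matrix.mul_assoc]
    rw [← Matrix.mul_assoc R' Q R, hR'Q, Matrix.one_mul,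
      ← Matrix.mul_assoc Q R' (Sh * R), hQR', Matrix.one_mul]
  have hsub : M * (R' * Sh * R' - 1) * Mᵀ = R * Sh * R - R * S' * R := by
    rw [Matrix.mul_sub, Matrix.mul_one, Matrix.sub_mul, hviaB, hMMt]
  have hid : invSqrt S * Sh * invSqrt S - 1
      = M * (R' * Sh * R' - 1) * Mᵀ + (R * S' * R - 1) := by
    rw [hsub, ← hRdef]
    abel
  have hspecA : specNorm (M * Mᵀ) ≤ 1 + Δ := by
    rw [hMMt]
    have : R * S' * R = (R * S' * R - 1) + 1 := by abel
    rw [this]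
    calc specNorm ((R * S' * R - 1) + 1)
        ≤ specNorm (R * S' * R - 1) + specNorm (1 : Matrix (Fin d) (Fin d) ℝ) :=
          specNorm_add_le _ _
      _ ≤ Δ + 1 := add_le_add (le_trans (hSpecLe _) h1) specNorm_one_le
      _ = 1 + Δ := by ring
  have hB0 : 0 ≤ N (R' * Sh * R' - 1) :=
    le_trans (specNorm_nonneg _) (hSpecLe _)
  calc N (invSqrt S * Sh * invSqrt S - 1)
      = N (M * (R' * Sh * R' - 1) * Mᵀ + (R * S' * R - 1)) := by rw [hid]
    _ ≤ N (M * (R' * Sh * R' - 1) * Mᵀ) + N (R * S' * R - 1) := hNadd _ _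
    _ ≤ specNorm (M * Mᵀ) * N (R' * Sh * R' - 1) + Δ := add_le_add (hMul _ _) h1
    _ ≤ (1 + Δ) * Δ + Δ := by
        have := mul_le_mul hspecA h2 hB0 (by linarith)
        linarith
    _ ≤ 3 * Δ := by nlinarith


end AuxNormLemmas

/-- triangle-inequality-type transfer for relative Frobenius/spectral norms. -/
theorem relative_norm_triangle_inequality {d : ℕ}
    (S S' Sh : Matrix (Fin d) (Fin d) ℝ)
    (hS : S.PosDef) (hS' : S'.PosDef) (hSh : Sh.PosDef) (Δ : ℝ) (hΔ : Δ ≤ 1) :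
    (frobNorm (invSqrt S * S' * invSqrt S - 1) ≤ Δ →
      frobNorm (invSqrt S' * Sh * invSqrt S' - 1) ≤ Δ →
      frobNorm (invSqrt S * Sh * invSqrt S - 1) ≤ 3 * Δ) ∧
    (specNorm (invSqrt S * S' * invSqrt S - 1) ≤ Δ →
      specNorm (invSqrt S' * Sh * invSqrt S' - 1) ≤ Δ →
      specNorm (invSqrt S * Sh * invSqrt S - 1) ≤ 3 * Δ) := by
  constructor
  · intro h1 h2
    refine key_bound (fun {m} => frobNorm) frobNorm_add_le ?_ specNorm_le_frobNorm
      S S' Sh hS hS' hSh Δ hΔ h1 h2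
    intro M X
    rw [Matrix.mul_assoc]
    calc frobNorm (M * (X * Mᵀ)) ≤ specNorm M * frobNorm (X * Mᵀ) := frobNorm_mul_le_spec _ _
      _ ≤ specNorm M * (frobNorm X * specNorm Mᵀ) := by
          refine mul_le_mul_of_nonneg_left (frobNorm_mul_le_spec' _ _) (specNorm_nonneg _)
      _ = specNorm (M * Mᵀ) * frobNorm X := by
          rw [specNorm_transpose, specNorm_mul_transpose_self]; ring
  · intro h1 h2
    refine key_bound (fun {m} => specNorm) specNorm_add_le ?_ (fun X => le_refl _)
      S S' Sh hS hS' hSh Δ hΔ h1 h2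
    intro M X
    calc specNorm (M * X * Mᵀ) ≤ specNorm (M * X) * specNorm Mᵀ := specNorm_mul_le _ _
      _ ≤ specNorm M * specNorm X * specNorm Mᵀ :=
          mul_le_mul_of_nonneg_right (specNorm_mul_le _ _) (specNorm_nonneg _)
      _ = specNorm (M * Mᵀ) * specNorm X := by
          rw [specNorm_transpose, specNorm_mul_transpose_self]; ring

end Paper
end
end

section
/- Let m ∈ ℕ, 𝒱 ⊆ ℝ^m, 𝒫 ⊆ ℝ^{m×m} with 𝒱⊗𝒱 ⊆ 𝒫, μ ∈ ℝ^m, Q ∈ ℝ^{m×m}, and reals ε, δ, r > 0 with ε < δ < 0.1. Let S be a (2ε, δ, r, 𝒱, 𝒫)-stable multiset of size n with respect to μ and Q, and let T = {x_1,…,x_n} be an ε-corruption of S. If for some w ∈ 𝒲_ε and λ > 0 we have |⟨P, Q − Σ_w⟩| ≤ λ for all P ∈ 𝒫, then sup_{v∈𝒱} |⟨v, μ_w − μ⟩| ≤ O(δ + √(ελ) + ε·r). -/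
open MeasureTheory ProbabilityTheory Matrix Finset Real Filter

noncomputable section

namespace Paper

variable {d n : ℕ}

set_option maxHeartbeats 1000000


lemma cs_sum {α : Type*} (G : Finset α) (d f : α → ℝ) (hd : ∀ i ∈ G, 0 ≤ d i) :
    (∑ i ∈ G, d i * f i) ^ 2 ≤ (∑ i ∈ G, d i) * (∑ i ∈ G, d i * (f i) ^ 2) := by
  have h := Finset.sum_mul_sq_le_sq_mul_sq G (fun i => Real.sqrt (d i))
      (fun i => Real.sqrt (d i) * f i)
  have e1 : ∀ i ∈ G, Real.sqrt (d i) * (Real.sqrt (d i) * f i) = d i * f i := fun i hi => by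
    rw [← mul_assoc, Real.mul_self_sqrt (hd i hi)]
  have e2 : ∀ i ∈ G, Real.sqrt (d i) ^ 2 = d i := fun i hi => Real.sq_sqrt (hd i hi)
  have e3 : ∀ i ∈ G, (Real.sqrt (d i) * f i) ^ 2 = d i * f i ^ 2 := fun i hi => by
    rw [mul_pow, Real.sq_sqrt (hd i hi)]
  rw [Finset.sum_congr rfl e1, Finset.sum_congr rfl e2, Finset.sum_congr rfl e3] at h
  exact h

lemma exists_topk {α : Type*} [DecidableEq α] (G : Finset α) (k : ℕ) (hk : k ≤ G.card)
    (F : α → ℝ) : ∃ B ⊆ G, B.card = k ∧ ∀ i ∈ B, ∀ j ∈ G, j ∉ B → F j ≤ F i := by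
  obtain ⟨B, hBmem, hBmax⟩ := Finset.exists_max_image (G.powersetCard k)
      (fun B => ∑ i ∈ B, F i) ((Finset.powersetCard_nonempty).2 hk)
  rw [Finset.mem_powersetCard] at hBmem
  obtain ⟨hBG, hBcard⟩ := hBmem
  refine ⟨B, hBG, hBcard, ?_⟩
  intro i hi j hj hjB
  by_contra hlt
  push_neg at hlt
  have hB' : (insert j (B.erase i)) ∈ G.powersetCard k := by
    rw [Finset.mem_powersetCard]
    constructor
    · intro a ha
      rcases Finset.mem_insert.1 ha with rfl | ha
      · exact hj
      · exact hBG (Finset.mem_of_mem_erase ha)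
    · rw [Finset.card_insert_of_notMem (fun h => hjB (Finset.mem_of_mem_erase h)),
        Finset.card_erase_of_mem hi, hBcard]
      have : 0 < k := hBcard ▸ Finset.card_pos.2 ⟨i, hi⟩
      omega
  have := hBmax _ hB'
  rw [Finset.sum_insert (fun h => hjB (Finset.mem_of_mem_erase h)),
    Finset.sum_erase_eq_sub hi] at this
  linarith

lemma sum_weighted_le_topk {α : Type*} [DecidableEq α] (G B : Finset α) (d F : α → ℝ) (c : ℝ)
    (hBG : B ⊆ G) (hd : ∀ i ∈ G, 0 ≤ d i ∧ d i ≤ c) (hF : ∀ i ∈ G, 0 ≤ F i)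
    (htop : ∀ i ∈ B, ∀ j ∈ G, j ∉ B → F j ≤ F i)
    (hsum : ∑ i ∈ G, d i ≤ c * B.card) :
    ∑ i ∈ G, d i * F i ≤ c * ∑ i ∈ B, F i := by
  rcases B.eq_empty_or_nonempty with rfl | hne
  · simp only [Finset.card_empty, Nat.cast_zero, mul_zero] at hsum
    have hz : ∀ i ∈ G, d i = 0 :=
      (Finset.sum_eq_zero_iff_of_nonneg (fun i hi => (hd i hi).1)).1
        (le_antisymm hsum (Finset.sum_nonneg (fun i hi => (hd i hi).1)))
    simp only [Finset.sum_empty, mul_zero]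
    rw [Finset.sum_congr rfl (fun i hi => by rw [hz i hi, zero_mul])]
    simp
  · obtain ⟨j₀, hj₀, hmin⟩ := Finset.exists_min_image B F hne
    have hsplit : ∑ i ∈ G, d i * F i = ∑ i ∈ G \ B, d i * F i + ∑ i ∈ B, d i * F i :=
      (Finset.sum_sdiff hBG).symm
    have h1 : ∑ i ∈ G \ B, d i * F i ≤ (∑ i ∈ G \ B, d i) * F j₀ := by
      rw [Finset.sum_mul]
      refine Finset.sum_le_sum (fun i hi => ?_)
      have hiG := (Finset.mem_sdiff.1 hi).1
      have hiB := (Finset.mem_sdiff.1 hi).2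
      exact mul_le_mul_of_nonneg_left (htop j₀ hj₀ i hiG hiB) (hd i hiG).1
    have h2 : ∑ i ∈ G \ B, d i = ∑ i ∈ G, d i - ∑ i ∈ B, d i := by
      rw [eq_sub_iff_add_eq, Finset.sum_sdiff hBG]
    have h3 : (∑ i ∈ G \ B, d i) * F j₀ ≤ (∑ i ∈ B, (c - d i)) * F j₀ := by
      refine mul_le_mul_of_nonneg_right ?_ (hF j₀ (hBG hj₀))
      rw [h2, Finset.sum_sub_distrib, Finset.sum_const, nsmul_eq_mul, mul_comm]
      linarith
    have h4 : (∑ i ∈ B, (c - d i)) * F j₀ ≤ ∑ i ∈ B, (c - d i) * F i := by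
      rw [Finset.sum_mul]
      refine Finset.sum_le_sum (fun i hi => ?_)
      have hcd : 0 ≤ c - d i := by linarith [(hd i (hBG hi)).2]
      exact mul_le_mul_of_nonneg_left (hmin i hi) hcd
    have h5 : ∑ i ∈ B, d i * F i + ∑ i ∈ B, (c - d i) * F i = c * ∑ i ∈ B, F i := by
      rw [← Finset.sum_add_distrib, Finset.mul_sum]
      exact Finset.sum_congr rfl (fun i _ => by ring)
    linarith

lemma crunch1 (t hb hc δ ℓ ρ : ℝ) (ht : 0 ≤ t) (hb0 : 0 ≤ hb) (hc0 : 0 ≤ hc)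
    (hδ : 0 < δ) (hℓ : 0 ≤ ℓ) (hρ : 0 ≤ ρ)
    (H1 : 0.8*t ≤ δ + hb + hc)
    (H2 : hb^2 ≤ 8*ρ^2 + 4*δ^2)
    (H3 : hc^2 ≤ 5*ρ^2 + 2.5*δ^2 + ℓ^2 + 0.2*t*δ + 0.2*t*hb) :
    t ≤ 100*(δ + ℓ + ρ) := by
  by_contra h
  push_neg at h
  have hhb : hb ≤ 3*ρ + 2*δ := by
    nlinarith [sq_nonneg (hb - 3*ρ - 2*δ), sq_nonneg (hb + 3*ρ + 2*δ)]
  have hc1 : 0.8*t - δ - hb ≤ hc := by linarith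
  nlinarith [sq_nonneg (0.8*t - δ - hb), mul_le_mul_of_nonneg_left hhb ht]

lemma crunch2 (t hb δ ℓ ρ : ℝ) (ht : 0 ≤ t) (hb0 : 0 ≤ hb)
    (hδ : 0 < δ) (hℓ : 0 ≤ ℓ) (hρ : 0 ≤ ρ)
    (H1 : 0.9*t ≤ δ + hb)
    (H2 : hb^2 ≤ ℓ^2 + δ^2/2 + ρ^2 + 0.1*t^2 + 0.2*t*δ + 0.2*t*hb) :
    t ≤ 100*(δ + ℓ + ρ) := by
  by_contra h
  push_neg at h
  have h1 : 0.9*t - δ ≤ hb := by linarith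
  nlinarith [mul_le_mul_of_nonneg_left h1 ht, sq_nonneg (hb - 0.9*t + δ)]

lemma kbd_aux (Sg SGF s g1 q B2 lam ε r : ℝ)
    (h1 : Sg - s*q ≤ lam) (h2 : -lam ≤ Sg - s*q)
    (h3 : g1*(q - B2) ≤ SGF) (h4 : SGF ≤ g1*(q+B2))
    (hg2 : g1 ≤ 1) (hB2 : 0 ≤ B2)
    (hp1 : (s - g1)*q ≤ ε*r^2) (hp2 : (g1 - s)*q ≤ ε*r^2) :
    |Sg - SGF| ≤ lam + B2 + ε*r^2 := by
  rw [abs_le]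
  constructor
  · nlinarith
  · nlinarith

lemma x0_final (X Fj SBe q B2 ε r nn kk : ℝ)
    (hXn : X * nn ≤ Fj + SBe)
    (hFj : Fj ≤ q + (2*nn - 1)*B2)
    (hSBe : SBe ≤ (kk-1)*q + (2*nn - kk + 1)*B2)
    (h1k : 1 ≤ kk) (hk2 : kk - 1 ≤ 2*ε*nn)
    (hnn : 1 ≤ nn) (hen : 1 ≤ 2*ε*nn)
    (hql : -r^2 ≤ q) (hqu : q ≤ r^2) (hB2 : 0 ≤ B2) (hε : 0 < ε) :
    X ≤ 4*ε*r^2 + 4*B2 := by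
  have h0 : (0:ℝ) < nn := lt_of_lt_of_le one_pos hnn
  have e1 : (kk-1)*q ≤ 2*ε*nn*r^2 := by
    nlinarith [mul_le_mul_of_nonneg_right hk2 (sq_nonneg r),
      mul_le_mul_of_nonneg_left hqu (show (0:ℝ) ≤ kk-1 by linarith)]
  have e2 : q ≤ 2*ε*nn*r^2 := by
    nlinarith [mul_le_mul_of_nonneg_right hen (sq_nonneg r)]
  have e3 : X * nn ≤ (4*ε*r^2 + 4*B2) * nn := by
    have hkB : 0 ≤ kk * B2 := mul_nonneg (by linarith) hB2
    nlinarith [hXn, hFj, hSBe, e1, e2, hkB]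
  exact le_of_mul_le_mul_right e3 h0

lemma core (n : ℕ) (ε δ r lam q s a : ℝ) (f g w : Fin n → ℝ) (G : Finset (Fin n))
    (hε : 0 < ε) (hεδ : ε < δ) (hδ : δ < 0.1) (hr : 0 < r) (hlam : 0 < lam)
    (hw : ∀ i, 0 ≤ w i ∧ w i ≤ 1 / (n:ℝ))
    (hs : s = ∑ i, w i) (hs_lb : 1 - ε ≤ s)
    (hG : (1 - ε) * (n:ℝ) ≤ (G.card : ℝ))
    (hfg : ∀ i ∈ G, g i = f i)
    (hst1 : ∀ M : Finset (Fin n), (1 - 2*ε) * (n:ℝ) ≤ (M.card : ℝ) →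
      |(M.card:ℝ)⁻¹ * ∑ i ∈ M, f i| ≤ δ)
    (hst2 : ∀ M : Finset (Fin n), (1 - 2*ε) * (n:ℝ) ≤ (M.card : ℝ) →
      |(M.card:ℝ)⁻¹ * ∑ i ∈ M, (f i)^2 - q| ≤ δ^2/(2*ε))
    (hq : |q| ≤ r^2)
    (hsa : s * a = ∑ i, w i * g i)
    (hSig : |q - s⁻¹ * ∑ i, w i * (g i - a)^2| ≤ lam) :
    |a| ≤ 100 * (δ + Real.sqrt (ε * lam) + ε * r) := by
  have hδ0 : 0 < δ := lt_trans hε hεδ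
  have hε1 : ε ≤ 0.1 := by linarith
  have hδ1 : δ ≤ 0.1 := le_of_lt hδ
  -- n ≥ 1
  have hn : 0 < n := by
    rcases Nat.eq_zero_or_pos n with h0 | h
    · exfalso; subst h0; simp at hs; rw [hs] at hs_lb; linarith
    · exact h
  have hnR : (0:ℝ) < n := by exact_mod_cast hn
  have hn1 : (1:ℝ) ≤ n := by exact_mod_cast hn
  have hcard_univ : ((Finset.univ : Finset (Fin n)).card : ℝ) = n := by simp
  have hGub : (G.card : ℝ) ≤ n := by
    have := Finset.card_le_univ G
    have h2 : (G.card:ℝ) ≤ (Finset.univ : Finset (Fin n)).card := by exact_mod_cast this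
    linarith [hcard_univ ▸ h2]
  have hs_ub : s ≤ 1 := by
    rw [hs]
    calc ∑ i, w i ≤ ∑ _i : Fin n, 1/(n:ℝ) := Finset.sum_le_sum (fun i _ => (hw i).2)
    _ = 1 := by rw [Finset.sum_const, nsmul_eq_mul, hcard_univ]; field_simp
  have hs_pos : 0 < s := by linarith
  -- stability in sum form
  have hstS : ∀ M : Finset (Fin n), (1 - 2*ε) * (n:ℝ) ≤ (M.card : ℝ) →
      |∑ i ∈ M, f i| ≤ (M.card:ℝ) * δ ∧
      (M.card:ℝ) * (q - δ^2/(2*ε)) ≤ ∑ i ∈ M, (f i)^2 ∧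
      ∑ i ∈ M, (f i)^2 ≤ (M.card:ℝ) * (q + δ^2/(2*ε)) := by
    intro M hM
    have hMpos : (0:ℝ) < M.card := by
      have h1 : (0.8:ℝ) ≤ 1 - 2*ε := by linarith
      have h2 : (0.8:ℝ) * n ≤ (1-2*ε) * n := mul_le_mul_of_nonneg_right h1 (le_of_lt hnR)
      linarith
    have h1 := hst1 M hM
    have h2 := hst2 M hM
    rw [abs_mul, abs_inv, abs_of_pos hMpos] at h1
    have h1' : |∑ i ∈ M, f i| ≤ (M.card:ℝ) * δ := by
      have := mul_le_mul_of_nonneg_left h1 (le_of_lt hMpos)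
      rwa [← mul_assoc, mul_inv_cancel₀ (ne_of_gt hMpos), one_mul] at this
    rw [abs_le] at h2
    obtain ⟨h2a, h2b⟩ := h2
    have hrw : ∑ i ∈ M, (f i)^2 = (M.card:ℝ) * ((M.card:ℝ)⁻¹ * ∑ i ∈ M, (f i)^2) := by
      rw [← mul_assoc, mul_inv_cancel₀ (ne_of_gt hMpos), one_mul]
    refine ⟨h1', ?_, ?_⟩
    · have e1 : q - δ^2/(2*ε) ≤ (M.card:ℝ)⁻¹ * ∑ i ∈ M, (f i)^2 := by linarith
      have := mul_le_mul_of_nonneg_left e1 hMpos.le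
      rw [hrw]; linarith
    · have e1 : (M.card:ℝ)⁻¹ * ∑ i ∈ M, (f i)^2 ≤ q + δ^2/(2*ε) := by linarith
      have := mul_le_mul_of_nonneg_left e1 hMpos.le
      rw [hrw]; linarith
  have hqlb : -r^2 ≤ q := neg_le_of_abs_le hq
  have hqub : q ≤ r^2 := le_of_abs_le hq
  have hB2 : (0:ℝ) < δ^2/(2*ε) := by positivity
  -- weights
  have hGbig : (1 - 2*ε) * (n:ℝ) ≤ (G.card : ℝ) := by
    have h0 : 0 ≤ ε * n := mul_nonneg hε.le hnR.le
    linarith [hG, h0]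
  set Wg := ∑ i ∈ G, w i with hWg_def
  set Wb := ∑ i ∈ Gᶜ, w i with hWb_def
  have hWW : Wg + Wb = s := by rw [hs]; exact Finset.sum_add_sum_compl G w
  have hWg0 : 0 ≤ Wg := Finset.sum_nonneg (fun i _ => (hw i).1)
  have hWb0 : 0 ≤ Wb := Finset.sum_nonneg (fun i _ => (hw i).1)
  have hGc_card : ((Gᶜ : Finset (Fin n)).card : ℝ) = n - G.card := by
    rw [Finset.card_compl, Fintype.card_fin, Nat.cast_sub (by
      simpa using Finset.card_le_univ G)]
  have hWb_le : Wb ≤ ε := by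
    have h1 : Wb ≤ ((Gᶜ : Finset (Fin n)).card : ℝ) * (1/(n:ℝ)) := by
      have := Finset.sum_le_card_nsmul (Gᶜ : Finset (Fin n)) w (1/(n:ℝ))
        (fun i _ => (hw i).2)
      rwa [nsmul_eq_mul] at this
    have h2 : ((Gᶜ : Finset (Fin n)).card : ℝ) ≤ ε * n := by
      rw [hGc_card]; linarith [hG]
    calc Wb ≤ ((Gᶜ : Finset (Fin n)).card : ℝ) * (1/(n:ℝ)) := h1
    _ ≤ (ε * n) * (1/(n:ℝ)) := by
        apply mul_le_mul_of_nonneg_right h2; positivity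
    _ = ε := by field_simp
  have hWg_lb : 1 - 2*ε ≤ Wg := by linarith
  have hWg_ub : Wg ≤ s := by linarith
  set d : Fin n → ℝ := fun i => 1/(n:ℝ) - w i with hd_def
  have hd0 : ∀ i, 0 ≤ d i := fun i => by simp only [hd_def]; linarith [(hw i).2]
  have hd1 : ∀ i, d i ≤ 1/(n:ℝ) := fun i => by simp only [hd_def]; linarith [(hw i).1]
  set D := ∑ i ∈ G, d i with hD_def
  have hD : D = (G.card:ℝ) * (1/(n:ℝ)) - Wg := by
    rw [hD_def, hWg_def]
    simp only [hd_def]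
    rw [Finset.sum_sub_distrib, Finset.sum_const, nsmul_eq_mul]
  have hD0 : 0 ≤ D := Finset.sum_nonneg (fun i _ => hd0 i)
  have hD2 : D ≤ 2*ε := by
    have : (G.card:ℝ) * (1/(n:ℝ)) ≤ 1 := by
      rw [mul_one_div, div_le_one hnR]; exact hGub
    rw [hD]; linarith
  -- main quantities
  set A := (1/(n:ℝ)) * ∑ i ∈ G, f i with hA_def
  set b := ∑ i ∈ G, d i * f i with hb_def
  set X := ∑ i ∈ G, d i * (f i)^2 with hX_def
  set cc := ∑ i ∈ Gᶜ, w i * (g i - a) with hcc_def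
  set Y := ∑ i ∈ Gᶜ, w i * (g i - a)^2 with hY_def
  set Sg := ∑ i, w i * (g i - a)^2 with hSg_def
  have hX0 : 0 ≤ X :=
    Finset.sum_nonneg (fun i _ => mul_nonneg (hd0 i) (sq_nonneg _))
  have hY0 : 0 ≤ Y :=
    Finset.sum_nonneg (fun i _ => mul_nonneg (hw i).1 (sq_nonneg _))
  have hA_abs : |A| ≤ δ := by
    have h1 := (hstS G hGbig).1
    rw [hA_def, abs_mul, abs_of_pos (by positivity : (0:ℝ) < 1/(n:ℝ))]
    have h2 : (1/(n:ℝ)) * |∑ i ∈ G, f i| ≤ (1/(n:ℝ)) * ((G.card:ℝ) * δ) :=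
      mul_le_mul_of_nonneg_left h1 (by positivity)
    have h3 : (1/(n:ℝ)) * ((G.card:ℝ) * δ) ≤ δ := by
      rw [← mul_assoc, mul_comm (1/(n:ℝ)) ((G.card:ℝ))]
      have h4 : (G.card:ℝ) * (1/(n:ℝ)) ≤ 1 := by
        rw [mul_one_div, div_le_one hnR]; exact hGub
      calc (G.card:ℝ) * (1/(n:ℝ)) * δ ≤ 1 * δ :=
            mul_le_mul_of_nonneg_right h4 hδ0.le
      _ = δ := one_mul δ
    linarith
  have hb2 : b^2 ≤ D * X := by
    rw [hb_def, hD_def, hX_def]; exact cs_sum G d f (fun i _ => hd0 i)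
  have hc2 : cc^2 ≤ Wb * Y := by
    rw [hcc_def, hWb_def, hY_def]
    exact cs_sum (Gᶜ) w (fun i => g i - a) (fun i _ => (hw i).1)
  have hGwf : ∑ i ∈ G, w i * f i = A - b := by
    have e : ∀ i ∈ G, w i * f i = (1/(n:ℝ)) * f i - d i * f i := fun i _ => by
      simp only [hd_def]; ring
    rw [Finset.sum_congr rfl e, Finset.sum_sub_distrib, ← Finset.mul_sum]
  have hGwF : ∑ i ∈ G, w i * (f i)^2 = (1/(n:ℝ)) * (∑ i ∈ G, (f i)^2) - X := by
    have e : ∀ i ∈ G, w i * (f i)^2 = (1/(n:ℝ)) * (f i)^2 - d i * (f i)^2 := fun i _ => by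
      simp only [hd_def]; ring
    rw [Finset.sum_congr rfl e, Finset.sum_sub_distrib, ← Finset.mul_sum, hX_def]
  have hGh : ∑ i ∈ G, w i * (g i - a)^2
      = ((1/(n:ℝ)) * (∑ i ∈ G, (f i)^2) - X) - 2*a*(A - b) + a^2 * Wg := by
    have e : ∀ i ∈ G, w i * (g i - a)^2
        = w i * (f i)^2 - 2*a*(w i * f i) + a^2 * w i := fun i hi => by
      rw [hfg i hi]; ring
    rw [Finset.sum_congr rfl e, Finset.sum_add_distrib, Finset.sum_sub_distrib,
      ← Finset.mul_sum, ← Finset.mul_sum, hGwF, hGwf, hWg_def]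
  have hstar : Wg * a = A - b + cc := by
    have h1 : ∑ i ∈ Gᶜ, w i * g i = cc + a * Wb := by
      have e : ∀ i ∈ Gᶜ, w i * g i = w i * (g i - a) + a * w i := fun i _ => by ring
      rw [Finset.sum_congr rfl e, Finset.sum_add_distrib, ← Finset.mul_sum,
        hcc_def, hWb_def]
    have h2 : ∑ i, w i * g i
        = (∑ i ∈ G, w i * g i) + ∑ i ∈ Gᶜ, w i * g i :=
      (Finset.sum_add_sum_compl G _).symm
    have h3 : ∑ i ∈ G, w i * g i = ∑ i ∈ G, w i * f i :=
      Finset.sum_congr rfl (fun i hi => by rw [hfg i hi])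
    have hWga : Wg * a = s * a - a * Wb := by rw [← hWW]; ring
    rw [hWga, hsa, h2, h3, hGwf, h1]; ring
  -- second moment control
  have hSgbd : |Sg - s*q| ≤ lam := by
    have h1 : s*q - Sg = s * (q - s⁻¹ * Sg) := by
      field_simp
    have h2 : |Sg - s*q| = s * |q - s⁻¹ * Sg| := by
      rw [abs_sub_comm, h1, abs_mul, abs_of_pos hs_pos]
    rw [h2]
    calc s * |q - s⁻¹ * Sg| ≤ 1 * lam := by
          apply mul_le_mul hs_ub hSig (abs_nonneg _) zero_le_one
    _ = lam := one_mul lam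
  have hsplitSg : Sg = (∑ i ∈ G, w i * (g i - a)^2) + Y := by
    rw [hSg_def, hY_def]; exact (Finset.sum_add_sum_compl G _).symm
  have hdiamond : Y - X + a^2*Wg - 2*a*(A - b)
      = Sg - (1/(n:ℝ)) * ∑ i ∈ G, (f i)^2 := by
    have := hsplitSg
    rw [hGh] at this
    linarith
  have hKbd : |Sg - (1/(n:ℝ)) * ∑ i ∈ G, (f i)^2| ≤ lam + δ^2/(2*ε) + ε*r^2 := by
    obtain ⟨_, hFlb, hFub⟩ := hstS G hGbig
    have hg1 : (1:ℝ) - ε ≤ (G.card:ℝ)/n := by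
      rw [le_div_iff₀ hnR]; linarith [hG]
    have hg2 : (G.card:ℝ)/n ≤ 1 := by
      rw [div_le_one hnR]; exact hGub
    have hSGF_ub : (1/(n:ℝ)) * ∑ i ∈ G, (f i)^2 ≤ ((G.card:ℝ)/n) * (q + δ^2/(2*ε)) := by
      have := mul_le_mul_of_nonneg_left hFub (by positivity : (0:ℝ) ≤ 1/(n:ℝ))
      calc (1/(n:ℝ)) * ∑ i ∈ G, (f i)^2
          ≤ (1/(n:ℝ)) * ((G.card:ℝ) * (q + δ^2/(2*ε))) := this
        _ = ((G.card:ℝ)/n) * (q + δ^2/(2*ε)) := by ring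
    have hSGF_lb : ((G.card:ℝ)/n) * (q - δ^2/(2*ε)) ≤ (1/(n:ℝ)) * ∑ i ∈ G, (f i)^2 := by
      have := mul_le_mul_of_nonneg_left hFlb (by positivity : (0:ℝ) ≤ 1/(n:ℝ))
      calc ((G.card:ℝ)/n) * (q - δ^2/(2*ε))
          = (1/(n:ℝ)) * ((G.card:ℝ) * (q - δ^2/(2*ε))) := by ring
        _ ≤ (1/(n:ℝ)) * ∑ i ∈ G, (f i)^2 := this
    have hprod : ∀ u : ℝ, |u| ≤ ε → u * q ≤ ε * r^2 := by
      intro u hu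
      calc u * q ≤ |u * q| := le_abs_self _
      _ = |u| * |q| := abs_mul u q
      _ ≤ ε * r^2 := mul_le_mul hu hq (abs_nonneg q) hε.le
    have hu1 : |s - (G.card:ℝ)/n| ≤ ε := by
      rw [abs_le]; constructor <;> linarith
    have hu2 : |(G.card:ℝ)/n - s| ≤ ε := by
      rw [abs_le]; constructor <;> linarith
    have hp1 : (s - (G.card:ℝ)/n) * q ≤ ε * r^2 := hprod _ hu1
    have hp2 : ((G.card:ℝ)/n - s) * q ≤ ε * r^2 := hprod _ hu2
    rw [abs_le] at hSgbd
    exact kbd_aux _ _ s ((G.card:ℝ)/n) q _ lam ε r hSgbd.2 hSgbd.1 hSGF_lb hSGF_ub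
      hg2 hB2.le hp1 hp2
  -- absolute-value quantities
  set t := |a| with ht_def
  have ht0 : 0 ≤ t := abs_nonneg a
  set tb := |b| with htb_def
  set tc := |cc| with htc_def
  have htb0 : 0 ≤ tb := abs_nonneg b
  have htc0 : 0 ≤ tc := abs_nonneg cc
  have hℓsq : Real.sqrt (ε*lam) ^ 2 = ε * lam := Real.sq_sqrt (by positivity)
  have hℓ0 : 0 ≤ Real.sqrt (ε*lam) := Real.sqrt_nonneg _
  have hρ0 : 0 ≤ ε*r := by positivity
  have hWgt : Wg * t = |A - b + cc| := by
    rw [ht_def, ← abs_of_nonneg hWg0, ← abs_mul, hstar]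
  have habsAb : |A - b| ≤ δ + tb := by
    calc |A - b| = |A + -b| := by rw [sub_eq_add_neg]
    _ ≤ |A| + |-b| := abs_add_le _ _
    _ = |A| + tb := by rw [abs_neg, htb_def]
    _ ≤ δ + tb := by linarith [hA_abs]
  have habs3 : |A - b + cc| ≤ δ + tb + tc := by
    calc |A - b + cc| ≤ |A - b| + |cc| := abs_add_le _ _
    _ ≤ δ + tb + tc := by rw [htc_def] at *; linarith [habsAb]
  have h2abs : |2*a*(A - b)| ≤ 2*t*(δ + tb) := by
    rw [abs_mul, abs_mul, abs_two, ← ht_def]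
    calc 2 * t * |A - b| ≤ 2 * t * (δ + tb) := by
          apply mul_le_mul_of_nonneg_left habsAb (by linarith)
    _ = 2*t*(δ + tb) := rfl
  have h2ab : 2*a*(A - b) ≤ 2*t*(δ + tb) := le_trans (le_abs_self _) h2abs
  have h2ab' : -(2*a*(A - b)) ≤ 2*t*(δ + tb) := le_trans (neg_le_abs _) h2abs
  have hSgle : Sg - (1/(n:ℝ)) * ∑ i ∈ G, (f i)^2 ≤ lam + δ^2/(2*ε) + ε*r^2 :=
    (abs_le.1 hKbd).2
  have hSgge : -(lam + δ^2/(2*ε) + ε*r^2) ≤ Sg - (1/(n:ℝ)) * ∑ i ∈ G, (f i)^2 :=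
    (abs_le.1 hKbd).1
  rcases le_or_gt 1 (2*ε*(n:ℝ)) with hcase | hcase
  · -- Case 1 : 1 ≤ 2εn
    have hXX : X ≤ 4*ε*r^2 + 4*(δ^2/(2*ε)) := by
      set k := ⌈D * (n:ℝ)⌉₊ with hk_def
      have hDn : D * n ≤ (G.card:ℝ) := by
        have h1 : D ≤ (G.card:ℝ) * (1/(n:ℝ)) := by rw [hD]; linarith [hWg0]
        calc D * n ≤ ((G.card:ℝ) * (1/(n:ℝ))) * n := mul_le_mul_of_nonneg_right h1 hnR.le
        _ = (G.card:ℝ) := by field_simp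
      have hkG : k ≤ G.card := by rw [hk_def, Nat.ceil_le]; exact hDn
      obtain ⟨B, hBG, hBcard, hBtop⟩ := exists_topk G k hkG (fun i => (f i)^2)
      have hXB : X ≤ (1/(n:ℝ)) * ∑ i ∈ B, (f i)^2 := by
        rw [hX_def]
        apply sum_weighted_le_topk G B d (fun i => (f i)^2) (1/(n:ℝ)) hBG
          (fun i _ => ⟨hd0 i, hd1 i⟩) (fun i _ => sq_nonneg _) hBtop
        rw [hBcard]
        have h5 : D * n ≤ (k:ℝ) := by rw [hk_def]; exact Nat.le_ceil _
        rw [← hD_def]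
        rw [show (1/(n:ℝ)) * (k:ℝ) = (k:ℝ)/n by ring, le_div_iff₀ hnR]
        linarith
      rcases Nat.eq_zero_or_pos k with hk0 | hk1
      · have hBempty : B = ∅ := Finset.card_eq_zero.1 (by rw [hBcard, hk0])
        rw [hBempty, Finset.sum_empty, mul_zero] at hXB
        have h6 : (0:ℝ) < 4*ε*r^2 := by positivity
        linarith [hB2]
      · obtain ⟨j, hj⟩ := Finset.card_pos.1 (by rw [hBcard]; exact hk1)
        have hBsplit : ∑ i ∈ B, (f i)^2 = (f j)^2 + ∑ i ∈ B.erase j, (f i)^2 :=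
          (Finset.add_sum_erase B _ hj).symm
        obtain ⟨_, hUl, hUu⟩ := hstS Finset.univ (by
          rw [hcard_univ]; linarith [mul_nonneg hε.le hnR.le])
        rw [hcard_univ] at hUl hUu
        have hU1card : (((Finset.univ : Finset (Fin n)).erase j).card:ℝ) = (n:ℝ) - 1 := by
          rw [Finset.card_erase_of_mem (Finset.mem_univ j), Nat.cast_sub
            (by simpa [Finset.card_univ] using Nat.one_le_iff_ne_zero.2 hn.ne'), Nat.cast_one, Finset.card_univ,
            Fintype.card_fin]
        obtain ⟨_, hE1l, _⟩ := hstS ((Finset.univ : Finset (Fin n)).erase j) (by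
          rw [hU1card]; linarith)
        rw [hU1card] at hE1l
        have hsum_es : ∑ i ∈ (Finset.univ : Finset (Fin n)).erase j, (f i)^2 + (f j)^2
            = ∑ i, (f i)^2 := Finset.sum_erase_add _ _ (Finset.mem_univ j)
        have hFj : (f j)^2 ≤ q + (2*(n:ℝ) - 1)*(δ^2/(2*ε)) := by linarith
        have hk1R : (1:ℝ) ≤ (k:ℝ) := by exact_mod_cast hk1
        have hB'card : ((B.erase j).card:ℝ) = (k:ℝ) - 1 := by
          rw [Finset.card_erase_of_mem hj, hBcard, Nat.cast_sub hk1, Nat.cast_one]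
        have h6 : k - 1 < ⌈D*(n:ℝ)⌉₊ := by rw [← hk_def]; exact Nat.sub_lt hk1 one_pos
        have h7 : ((k-1:ℕ):ℝ) < D * n := Nat.lt_ceil.1 h6
        have hkDn2 : (k:ℝ) - 1 ≤ D * n := by
          rw [Nat.cast_sub hk1, Nat.cast_one] at h7; linarith
        have hkn : (k:ℝ) - 1 ≤ 2*ε*n :=
          le_trans hkDn2 (by
            calc D * n ≤ (2*ε) * n := mul_le_mul_of_nonneg_right hD2 hnR.le
            _ = 2*ε*n := by ring)
        have hM'sub : B.erase j ⊆ (Finset.univ : Finset (Fin n)) := Finset.subset_univ _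
        have hM'card : (((Finset.univ : Finset (Fin n)) \ B.erase j).card : ℝ)
            = (n:ℝ) - ((k:ℝ) - 1) := by
          rw [Finset.card_sdiff_of_subset hM'sub, Finset.card_univ,
            Nat.cast_sub (Finset.card_le_univ _), hB'card, Fintype.card_fin]
        obtain ⟨_, hM'l, _⟩ := hstS ((Finset.univ : Finset (Fin n)) \ B.erase j) (by
          rw [hM'card]; linarith)
        rw [hM'card] at hM'l
        have hsdiff : ∑ i ∈ (Finset.univ : Finset (Fin n)) \ B.erase j, (f i)^2
            + ∑ i ∈ B.erase j, (f i)^2 = ∑ i, (f i)^2 := Finset.sum_sdiff hM'sub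
        have hBe : ∑ i ∈ B.erase j, (f i)^2
            ≤ ((k:ℝ)-1)*q + (2*(n:ℝ) - (k:ℝ) + 1)*(δ^2/(2*ε)) := by
          linarith [hUu, hM'l, hsdiff]
        have hXn : X * n ≤ (f j)^2 + ∑ i ∈ B.erase j, (f i)^2 := by
          calc X * n ≤ ((1/(n:ℝ)) * ∑ i ∈ B, (f i)^2) * n :=
                mul_le_mul_of_nonneg_right hXB hnR.le
          _ = ∑ i ∈ B, (f i)^2 := by field_simp
          _ = (f j)^2 + ∑ i ∈ B.erase j, (f i)^2 := hBsplit
        exact x0_final X ((f j)^2) (∑ i ∈ B.erase j, (f i)^2) q (δ^2/(2*ε)) ε r n (k:ℝ)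
          hXn hFj hBe hk1R hkn hn1 hcase hqlb hqub hB2.le hε
    -- now assemble case 1
    have H1 : 0.8*t ≤ δ + tb + tc := by
      have h08 : (0.8:ℝ) ≤ Wg := by linarith
      have h9 : 0.8*t ≤ Wg*t := mul_le_mul_of_nonneg_right h08 ht0
      rw [hWgt] at h9
      linarith [habs3]
    have H2 : tb^2 ≤ 8*(ε*r)^2 + 4*δ^2 := by
      have hDX : D * X ≤ (2*ε) * (4*ε*r^2 + 4*(δ^2/(2*ε))) := by
        calc D * X ≤ (2*ε) * X := mul_le_mul_of_nonneg_right hD2 hX0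
        _ ≤ (2*ε) * (4*ε*r^2 + 4*(δ^2/(2*ε))) :=
            mul_le_mul_of_nonneg_left hXX (by linarith)
      have hnum : (2*ε) * (4*ε*r^2 + 4*(δ^2/(2*ε))) = 8*(ε*r)^2 + 4*δ^2 := by
        field_simp; ring
      rw [htb_def, sq_abs]
      linarith [hb2]
    have hYb : Y ≤ (4*ε*r^2 + 4*(δ^2/(2*ε))) + (lam + δ^2/(2*ε) + ε*r^2)
        + 2*t*(δ + tb) := by
      have ha2 : 0 ≤ a^2 * Wg := mul_nonneg (sq_nonneg a) hWg0
      linarith [hdiamond, hXX, h2ab, hSgle, ha2]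
    have H3 : tc^2 ≤ 5*(ε*r)^2 + 2.5*δ^2 + (Real.sqrt (ε*lam))^2 + 0.2*t*δ + 0.2*t*tb := by
      have h10 : cc^2 ≤ ε * Y := le_trans hc2 (mul_le_mul_of_nonneg_right hWb_le hY0)
      have h11 : ε * Y ≤ ε * ((4*ε*r^2 + 4*(δ^2/(2*ε))) + (lam + δ^2/(2*ε) + ε*r^2)
          + 2*t*(δ + tb)) := mul_le_mul_of_nonneg_left hYb hε.le
      have hnum2 : ε * ((4*ε*r^2 + 4*(δ^2/(2*ε))) + (lam + δ^2/(2*ε) + ε*r^2)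
          + 2*t*(δ + tb)) = 5*(ε*r)^2 + 2.5*δ^2 + ε*lam + 2*ε*(t*(δ + tb)) := by
        field_simp; ring
      have h12 : 2*ε*(t*(δ + tb)) ≤ 0.2*(t*(δ + tb)) := by
        apply mul_le_mul_of_nonneg_right (by linarith : 2*ε ≤ (0.2:ℝ))
          (mul_nonneg ht0 (by linarith))
      rw [htc_def, sq_abs, hℓsq]
      linarith [h10, h11, hnum2, h12]
    exact crunch1 t tb tc δ (Real.sqrt (ε*lam)) (ε*r) ht0 htb0 htc0 hδ0 hℓ0 hρ0 H1 H2 H3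
  · -- Case 2 : 2εn < 1, so G = univ
    have hGuniv : G = Finset.univ := by
      have hεn : ε*(n:ℝ) < 1 := by linarith [mul_nonneg hε.le hnR.le]
      have h1 : (n:ℝ) - 1 < G.card := by linarith [hG]
      have h2 : n ≤ G.card := by
        have h3 : (n:ℝ) < (G.card:ℝ) + 1 := by linarith
        have h4 : n < G.card + 1 := by exact_mod_cast h3
        omega
      apply Finset.eq_univ_of_card
      have h5 : G.card ≤ Fintype.card (Fin n) := Finset.card_le_univ G
      rw [Fintype.card_fin] at h5 ⊢
      omega
    have hGcE : (Gᶜ : Finset (Fin n)) = ∅ := by rw [hGuniv, Finset.compl_univ]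
    have hYz : Y = 0 := by rw [hY_def, hGcE, Finset.sum_empty]
    have hccz : cc = 0 := by rw [hcc_def, hGcE, Finset.sum_empty]
    have hWbz : Wb = 0 := by rw [hWb_def, hGcE, Finset.sum_empty]
    have hWgs : Wg = s := by linarith
    have hGcardn : (G.card:ℝ) = n := by rw [hGuniv, Finset.card_univ, Fintype.card_fin]
    have hDs : D ≤ ε := by
      rw [hD, hGcardn]
      have : (n:ℝ) * (1/(n:ℝ)) = 1 := by field_simp
      rw [this]
      linarith
    have hXb2 : X ≤ (lam + δ^2/(2*ε) + ε*r^2) + t^2 + 2*t*(δ + tb) := by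
      have ha2 : a^2 * Wg ≤ t^2 := by
        rw [ht_def, sq_abs]
        calc a^2 * Wg ≤ a^2 * 1 := by
              apply mul_le_mul_of_nonneg_left (by linarith) (sq_nonneg a)
        _ = a^2 := mul_one _
      linarith [hdiamond, hYz, h2ab', hSgge, ha2]
    have H2' : tb^2 ≤ (Real.sqrt (ε*lam))^2 + δ^2/2 + (ε*r)^2 + 0.1*t^2
        + 0.2*t*δ + 0.2*t*tb := by
      have h10 : b^2 ≤ ε * X := by
        calc b^2 ≤ D * X := hb2
        _ ≤ ε * X := mul_le_mul_of_nonneg_right hDs hX0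
      have h11 : ε * X ≤ ε * ((lam + δ^2/(2*ε) + ε*r^2) + t^2 + 2*t*(δ + tb)) :=
        mul_le_mul_of_nonneg_left hXb2 hε.le
      have hnum3 : ε * ((lam + δ^2/(2*ε) + ε*r^2) + t^2 + 2*t*(δ + tb))
          = ε*lam + δ^2/2 + (ε*r)^2 + ε*t^2 + 2*ε*(t*(δ + tb)) := by
        field_simp
      have h12 : 2*ε*(t*(δ + tb)) ≤ 0.2*(t*(δ + tb)) := by
        apply mul_le_mul_of_nonneg_right (by linarith : 2*ε ≤ (0.2:ℝ))
          (mul_nonneg ht0 (by linarith))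
      have h13 : ε*t^2 ≤ 0.1*t^2 := by
        apply mul_le_mul_of_nonneg_right hε1 (sq_nonneg t)
      rw [htb_def, sq_abs, hℓsq]
      linarith [h10, h11, hnum3, h12, h13]
    have H1' : 0.9*t ≤ δ + tb := by
      have h09 : (0.9:ℝ) ≤ Wg := by rw [hWgs]; linarith
      have h9 : 0.9*t ≤ Wg*t := mul_le_mul_of_nonneg_right h09 ht0
      rw [hWgt, hccz, add_zero] at h9
      linarith [habsAb]
    exact crunch2 t tb δ (Real.sqrt (ε*lam)) (ε*r) ht0 htb0 hδ0 hℓ0 hρ0 H1' H2'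


lemma innerM_outer_outer {ι : Type*} [Fintype ι] (v z : ι → ℝ) :
    innerM (outer v v) (outer z z) = (inner1 v z) ^ 2 := by
  simp only [innerM, outer, inner1, sq, Finset.sum_mul_sum]
  rw [Finset.sum_comm]
  congr 1; ext j; congr 1; ext k; ring

lemma innerM_sub' {ι : Type*} [Fintype ι] (p A B : ι → ι → ℝ) :
    innerM p (fun j k => A j k - B j k) = innerM p A - innerM p B := by
  simp only [innerM, mul_sub, Finset.sum_sub_distrib]

lemma innerM_outer_weighted {ι : Type*} [Fintype ι] {n : ℕ} (v : ι → ℝ) (c : ℝ)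
    (u : Fin n → ℝ) (z : Fin n → ι → ℝ) :
    innerM (outer v v) (fun j k => c * ∑ i, u i * z i j * z i k)
      = c * ∑ i, u i * (inner1 v (z i))^2 := by
  have step1 : innerM (outer v v) (fun j k => c * ∑ i, u i * z i j * z i k)
      = ∑ j, ∑ k, ∑ i, c * (u i * ((v j * z i j) * (v k * z i k))) := by
    simp only [innerM, outer]
    refine Finset.sum_congr rfl fun j _ => Finset.sum_congr rfl fun k _ => ?_
    rw [Finset.mul_sum, Finset.mul_sum]
    exact Finset.sum_congr rfl fun i _ => by ring
  have step2 : ∑ j, ∑ k, ∑ i, c * (u i * ((v j * z i j) * (v k * z i k)))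
      = ∑ i, ∑ j, ∑ k, c * (u i * ((v j * z i j) * (v k * z i k))) := by
    have h1 : ∀ j : ι, (∑ k, ∑ i, c * (u i * ((v j * z i j) * (v k * z i k))))
        = ∑ i, ∑ k, c * (u i * ((v j * z i j) * (v k * z i k))) :=
      fun j => Finset.sum_comm
    rw [Finset.sum_congr rfl (fun j _ => h1 j)]
    exact Finset.sum_comm
  have step3 : ∀ i : Fin n, (∑ j, ∑ k, c * (u i * ((v j * z i j) * (v k * z i k))))
      = c * (u i * (inner1 v (z i))^2) := by
    intro i
    have e1 : ∀ j, (∑ k, c * (u i * ((v j * z i j) * (v k * z i k))))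
        = (c * u i * (v j * z i j)) * (∑ k, v k * z i k) := by
      intro j
      rw [Finset.mul_sum]
      exact Finset.sum_congr rfl fun k _ => by ring
    rw [Finset.sum_congr rfl (fun j _ => e1 j), ← Finset.sum_mul]
    have e2 : (∑ j, c * u i * (v j * z i j)) = c * u i * ∑ j, v j * z i j := by
      rw [Finset.mul_sum]
    rw [e2]
    simp only [inner1]
    ring
  rw [step1, step2, Finset.sum_congr rfl (fun i _ => step3 i), ← Finset.mul_sum]

lemma wmean_glue {m n : ℕ} (v μ : Fin m → ℝ) (x : Fin n → Fin m → ℝ)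
    (w : Fin n → ℝ) (hs : (∑ i, w i) ≠ 0) :
    (∑ i, w i) * inner1 v (fun j => wMean w x j - μ j)
      = ∑ i, w i * inner1 v (fun j => x i j - μ j) := by
  simp only [inner1, wMean]
  rw [Finset.mul_sum]
  calc ∑ j, (∑ i, w i) * (v j * ((∑ i, w i)⁻¹ * ∑ i, w i * x i j - μ j))
      = ∑ j, ∑ i, v j * (w i * (x i j - μ j)) := by
        refine Finset.sum_congr rfl fun j _ => ?_
        have e1 : (∑ i, w i) * (v j * ((∑ i, w i)⁻¹ * ∑ i, w i * x i j - μ j))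
            = v j * ((∑ i, w i * x i j) - (∑ i, w i) * μ j) := by
          field_simp
        rw [e1, Finset.sum_mul, ← Finset.sum_sub_distrib, Finset.mul_sum]
        exact Finset.sum_congr rfl fun i _ => by ring
    _ = ∑ i, ∑ j, v j * (w i * (x i j - μ j)) := Finset.sum_comm
    _ = ∑ i, w i * ∑ j, v j * (x i j - μ j) := by
        refine Finset.sum_congr rfl fun i _ => ?_
        rw [Finset.mul_sum]
        exact Finset.sum_congr rfl fun j _ => by ring

/-- stability implies closeness of the weighted mean. -/
theorem stability_implies_mean_closeness :
    ∃ C : ℝ, 0 < C ∧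
      ∀ (m n : ℕ) (ε δ r lam : ℝ)
        (V : Set (Fin m → ℝ)) (P : Set (Fin m → Fin m → ℝ))
        (μ : Fin m → ℝ) (Q : Fin m → Fin m → ℝ)
        (y x : Fin n → Fin m → ℝ) (w : Fin n → ℝ),
        0 < ε → ε < δ → δ < 0.1 → 0 < r → 0 < lam →
        TensorSub V P →
        IsStable y (2 * ε) δ r V P μ Q →
        Corruption n ε x y →
        w ∈ weightSet n ε →
        (∀ p ∈ P, |innerM p (fun j k => Q j k - wCov w x j k)| ≤ lam) →
        ∀ v ∈ V, |inner1 v (fun j => wMean w x j - μ j)| ≤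
          C * (δ + Real.sqrt (ε * lam) + ε * r) := by
  refine ⟨100, by norm_num, ?_⟩
  intro m n ε δ r lam V P μ Q y x w hε hεδ hδ hr hlam hTS hstab hcor hw hcov v hv
  obtain ⟨G, hGcard, hGeq⟩ := hcor
  obtain ⟨hw1, hw2⟩ := hw
  have hp : outer v v ∈ P := hTS v hv v hv
  have hs_pos : (0:ℝ) < ∑ i, w i := by
    rcases Nat.eq_zero_or_pos n with h0 | hn
    · exfalso
      subst h0
      simp only [Finset.univ_eq_empty, Finset.sum_empty] at hw2
      linarith
    · linarith
  have hsne : (∑ i, w i) ≠ 0 := ne_of_gt hs_pos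
  -- stability conversions
  have hst1 : ∀ M : Finset (Fin n), (1 - 2*ε) * (n:ℝ) ≤ (M.card : ℝ) →
      |(M.card:ℝ)⁻¹ * ∑ i ∈ M, inner1 v (fun j => y i j - μ j)| ≤ δ := by
    intro M hM
    have h := (hstab v hv _ hp M (by rw [two_mul] at *; exact hM)).1
    convert h using 4
  have hst2 : ∀ M : Finset (Fin n), (1 - 2*ε) * (n:ℝ) ≤ (M.card : ℝ) →
      |(M.card:ℝ)⁻¹ * ∑ i ∈ M, (inner1 v (fun j => y i j - μ j))^2
        - innerM (outer v v) Q| ≤ δ^2/(2*ε) := by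
    intro M hM
    have h := (hstab v hv _ hp M hM).2.1
    have e : ∀ i : Fin n, innerM (outer v v)
        (outer (fun j => y i j - μ j) (fun j => y i j - μ j))
        = (inner1 v (fun j => y i j - μ j))^2 := fun i => innerM_outer_outer v _
    rw [Finset.sum_congr rfl (fun i _ => e i)] at h
    exact h
  have hqr : |innerM (outer v v) Q| ≤ r^2 := by
    refine (hstab v hv _ hp Finset.univ ?_).2.2
    rw [Finset.card_univ, Fintype.card_fin]
    have h0 : (0:ℝ) ≤ (n:ℝ) := Nat.cast_nonneg n
    nlinarith [mul_nonneg hε.le h0]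
  -- weighted mean identity
  have hsa : (∑ i, w i) * inner1 v (fun j => wMean w x j - μ j)
      = ∑ i, w i * inner1 v (fun j => x i j - μ j) :=
    wmean_glue v μ x w hsne
  -- covariance identity
  have hcovM : innerM (outer v v) (wCov w x)
      = (∑ i, w i)⁻¹ * ∑ i, w i * (inner1 v (fun j => x i j - wMean w x j))^2 := by
    have h := innerM_outer_weighted v ((∑ i, w i)⁻¹) w (fun i j => x i j - wMean w x j)
    exact h
  have hpt : ∀ i : Fin n, inner1 v (fun j => x i j - wMean w x j)
      = inner1 v (fun j => x i j - μ j) - inner1 v (fun j => wMean w x j - μ j) := by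
    intro i
    simp only [inner1]
    rw [← Finset.sum_sub_distrib]
    exact Finset.sum_congr rfl fun j _ => by ring
  have hSig : |innerM (outer v v) Q - (∑ i, w i)⁻¹ * ∑ i, w i *
      (inner1 v (fun j => x i j - μ j) - inner1 v (fun j => wMean w x j - μ j))^2|
      ≤ lam := by
    have h := hcov _ hp
    have hsub : innerM (outer v v) (fun j k => Q j k - wCov w x j k)
        = innerM (outer v v) Q - innerM (outer v v) (wCov w x) :=
      innerM_sub' (outer v v) Q (wCov w x)
    rw [hsub, hcovM] at h
    rw [show (∑ i, w i * (inner1 v (fun j => x i j - μ j)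
        - inner1 v (fun j => wMean w x j - μ j))^2)
        = ∑ i, w i * (inner1 v (fun j => x i j - wMean w x j))^2 from
      Finset.sum_congr rfl fun i _ => by rw [hpt i]]
    exact h
  have hfg : ∀ i ∈ G, inner1 v (fun j => x i j - μ j)
      = inner1 v (fun j => y i j - μ j) := by
    intro i hi
    rw [hGeq i hi]
  exact core n ε δ r lam (innerM (outer v v) Q) (∑ i, w i)
    (inner1 v (fun j => wMean w x j - μ j))
    (fun i => inner1 v (fun j => y i j - μ j))
    (fun i => inner1 v (fun j => x i j - μ j))
    w G hε hεδ hδ hr hlam hw1 rfl hw2 hGcard hfg hst1 hst2 hqr hsa hSig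


end Paper
end
end

section
/- There exists an absolute constant C' > 0 such that the following holds. Let Σ ∈ ℝ^{d×d} be positive definite, let y ∼ N(0,Σ), and let ℱ be the truncated spatial sign map with threshold Δ = 0.1d. Then for every u ∈ ℝ^d and every even p ∈ ℕ, (E⟨u, ℱ(y)⟩^p)^{1/p} ≤ C'·√p·(E⟨u, ℱ(y)⟩²)^{1/2}; that is, the distribution of ℱ(y) is O(1)-sub-Gaussian. -/
open MeasureTheory ProbabilityTheory Matrix Finset Real Filter

noncomputable section

namespace Paper

variable {d n : ℕ}

section AuxSubgaussian

lemma gr_withDensity (μ : ℝ) : gaussianReal μ 1 =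
    MeasureTheory.volume.withDensity (fun x => ((Real.toNNReal (gaussianPDFReal μ 1 x) : NNReal) : ENNReal)) := by
  rw [gaussianReal_of_var_ne_zero μ one_ne_zero]
  rfl

lemma integral_gaussianReal_eq (μ : ℝ) (g : ℝ → ℝ) :
    ∫ x, g x ∂(gaussianReal μ 1) = ∫ x, gaussianPDFReal μ 1 x * g x := by
  rw [gr_withDensity, integral_withDensity_eq_integral_smul
    ((measurable_gaussianPDFReal μ 1).real_toNNReal) g]
  congr 1
  ext x
  simp only [NNReal.smul_def, Real.coe_toNNReal _ (gaussianPDFReal_nonneg _ _ _), smul_eq_mul]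

lemma integrable_gaussianReal_iff (μ : ℝ) (g : ℝ → ℝ) :
    Integrable g (gaussianReal μ 1) ↔ Integrable (fun x => gaussianPDFReal μ 1 x * g x) := by
  rw [gr_withDensity, integrable_withDensity_iff_integrable_smul
    ((measurable_gaussianPDFReal μ 1).real_toNNReal)]
  constructor <;> intro h <;> refine h.congr (Filter.Eventually.of_forall fun x => ?_) <;>
    simp only [NNReal.smul_def, Real.coe_toNNReal _ (gaussianPDFReal_nonneg _ _ _), smul_eq_mul]

lemma pdf_mul_exp (a x : ℝ) :
    gaussianPDFReal 0 1 x * Real.exp (a * x) = Real.exp (a ^ 2 / 2) * gaussianPDFReal a 1 x := by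
  simp only [gaussianPDFReal, NNReal.coe_one, mul_one, sub_zero]
  rw [mul_assoc, ← Real.exp_add, mul_comm (Real.exp (a^2/2)), mul_assoc, ← Real.exp_add]
  congr 2
  ring

lemma integral_exp_gaussian (a : ℝ) :
    ∫ x, Real.exp (a * x) ∂(gaussianReal 0 1) = Real.exp (a ^ 2 / 2) := by
  rw [integral_gaussianReal_eq]
  simp_rw [pdf_mul_exp]
  rw [integral_const_mul, integral_gaussianPDFReal_eq_one a one_ne_zero, mul_one]

lemma integrable_exp_gaussian (a : ℝ) :
    Integrable (fun x => Real.exp (a * x)) (gaussianReal 0 1) := by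
  rw [integrable_gaussianReal_iff]
  refine Integrable.congr ((integrable_gaussianPDFReal a 1).const_mul (Real.exp (a ^ 2 / 2)))
    (Filter.Eventually.of_forall fun x => ?_)
  exact (pdf_mul_exp a x).symm

lemma abs_le_exp_add_exp (x : ℝ) : |x| ≤ Real.exp x + Real.exp (-x) := by
  have h1 : |x| ≤ Real.exp |x| := (Real.add_one_le_exp |x|).trans' (by linarith [abs_nonneg x])
  rcases abs_cases x with ⟨h, _⟩ | ⟨h, _⟩ <;> rw [h] at h1 <;>
    nlinarith [Real.exp_pos x, Real.exp_pos (-x), h1]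

lemma integrable_id_gaussian : Integrable (fun x => x) (gaussianReal 0 1) := by
  refine Integrable.mono' ((integrable_exp_gaussian 1).add (integrable_exp_gaussian (-1)))
    measurable_id.aestronglyMeasurable (Filter.Eventually.of_forall fun x => ?_)
  simpa using abs_le_exp_add_exp x

lemma gaussian_map_neg : (gaussianReal 0 1).map (fun x => -x) = gaussianReal 0 1 := by
  have h := gaussianReal_map_const_mul (μ := 0) (v := 1) (-1)
  simp only [mul_zero] at h
  have h2 : NNReal.mk ((-1:ℝ)^2) (sq_nonneg _) * 1 = 1 := by
    ext; norm_num
  rw [h2] at h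
  rw [← h]
  congr 1
  ext x
  ring

lemma integral_id_gaussian : ∫ x, x ∂(gaussianReal 0 1) = 0 := by
  have h1 : ∫ x, (fun y : ℝ => y) x ∂((gaussianReal 0 1).map (fun x : ℝ => -x))
      = ∫ x, -x ∂(gaussianReal 0 1) :=
    integral_map measurable_neg.aemeasurable measurable_id.aestronglyMeasurable
  rw [gaussian_map_neg, integral_neg] at h1
  simp only [] at h1
  linarith

lemma integral_sq_gaussian : ∫ x, x ^ 2 ∂(gaussianReal 0 1) = 1 := by
  rw [integral_gaussianReal_eq]
  have hpdf : ∀ x : ℝ, gaussianPDFReal 0 1 x * x ^ 2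
      = (Real.sqrt (2 * π))⁻¹ * (x ^ 2 * Real.exp (-(2:ℝ)⁻¹ * x ^ 2)) := by
    intro x
    simp only [gaussianPDFReal, NNReal.coe_one, mul_one, sub_zero]
    ring_nf
  simp_rw [hpdf]
  rw [integral_const_mul]
  have heven : ∫ x : ℝ, x ^ 2 * Real.exp (-(2:ℝ)⁻¹ * x ^ 2)
      = 2 * ∫ x in Set.Ioi (0:ℝ), x ^ 2 * Real.exp (-(2:ℝ)⁻¹ * x ^ 2) := by
    rw [← integral_comp_abs (f := fun x => x ^ 2 * Real.exp (-(2:ℝ)⁻¹ * x ^ 2))]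
    congr 1
    ext x
    rw [sq_abs]
  rw [heven]
  have hval : ∫ x in Set.Ioi (0:ℝ), x ^ 2 * Real.exp (-(2:ℝ)⁻¹ * x ^ 2)
      = ((2:ℝ)⁻¹) ^ (-(2+1:ℝ)/2) * (1/2) * Real.Gamma ((2+1)/2) := by
    have h := integral_rpow_mul_exp_neg_mul_rpow (p := 2) (q := 2) (b := (2:ℝ)⁻¹)
      (by norm_num) (by norm_num) (by norm_num)
    rw [← h]
    refine setIntegral_congr_fun measurableSet_Ioi fun x _ => ?_
    rw [show (2:ℝ) = ((2:ℕ):ℝ) by norm_num, Real.rpow_natCast]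
  rw [hval]
  have hG : Real.Gamma ((2+1)/2) = Real.sqrt π / 2 := by
    rw [show ((2+1)/2 : ℝ) = 1/2 + 1 by norm_num, Real.Gamma_add_one (by norm_num),
      Real.Gamma_one_half_eq]
    ring
  have hP : ((2:ℝ)⁻¹) ^ (-(2+1:ℝ)/2) = 2 * Real.sqrt 2 := by
    rw [Real.inv_rpow (by norm_num), ← Real.rpow_neg (by norm_num)]
    rw [show (-(-(2+1:ℝ)/2)) = 1 + 1/2 by norm_num, Real.rpow_add (by norm_num),
      Real.rpow_one, ← Real.sqrt_eq_rpow]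
  rw [hG, hP]
  rw [show Real.sqrt (2*π) = Real.sqrt 2 * Real.sqrt π from Real.sqrt_mul (by norm_num) π]
  have h2 : Real.sqrt 2 ≠ 0 := by positivity
  have hp : Real.sqrt π ≠ 0 := by
    have := Real.pi_pos; positivity
  field_simp


lemma integrable_sq_gaussian : Integrable (fun x : ℝ => x ^ 2) (gaussianReal 0 1) := by
  rw [integrable_gaussianReal_iff]
  have h : Integrable (fun x : ℝ => x ^ (2:ℝ) * Real.exp (-(2:ℝ)⁻¹ * x ^ 2)) :=
    integrable_rpow_mul_exp_neg_mul_sq (by norm_num) (by norm_num)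
  have hx : ∀ y : ℝ, y ^ (2:ℝ) = y ^ (2:ℕ) := fun y => by
    rw [show (2:ℝ) = ((2:ℕ):ℝ) by norm_num, Real.rpow_natCast]
  have h2 : Integrable (fun x : ℝ => x ^ 2 * Real.exp (-(2:ℝ)⁻¹ * x ^ 2)) := by
    refine h.congr (Filter.Eventually.of_forall fun x => ?_)
    beta_reduce
    rw [hx]
  refine (h2.const_mul ((Real.sqrt (2*π))⁻¹)).congr (Filter.Eventually.of_forall fun x => ?_)
  have hpdf : gaussianPDFReal 0 1 x * x ^ 2
      = (Real.sqrt (2 * π))⁻¹ * (x ^ 2 * Real.exp (-(2:ℝ)⁻¹ * x ^ 2)) := by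
    simp only [gaussianPDFReal, NNReal.coe_one, mul_one, sub_zero]
    ring_nf
  beta_reduce
  exact hpdf.symm
lemma pi_integral {d : ℕ} (f : Fin d → ℝ → ℝ) :
    ∫ x, ∏ i, f i (x i) ∂(stdGaussian d) = ∏ i, ∫ x, f i x ∂(gaussianReal 0 1) := by
  letI : MeasureSpace ℝ := ⟨gaussianReal 0 1⟩
  haveI : SigmaFinite (volume : Measure ℝ) := inferInstanceAs (SigmaFinite (gaussianReal 0 1))
  exact MeasureTheory.integral_fintype_prod_eq_prod f

lemma pi_integrable {d : ℕ} (f : Fin d → ℝ → ℝ)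
    (hf : ∀ i, Integrable (f i) (gaussianReal 0 1)) :
    Integrable (fun x => ∏ i, f i (x i)) (stdGaussian d) := by
  letI : MeasureSpace ℝ := ⟨gaussianReal 0 1⟩
  haveI : SigmaFinite (volume : Measure ℝ) := inferInstanceAs (SigmaFinite (gaussianReal 0 1))
  exact MeasureTheory.Integrable.fintype_prod hf

variable (c : Fin d → ℝ)

lemma integral_exp_sum :
    ∫ x, Real.exp (∑ j, c j * x j) ∂(stdGaussian d) = Real.exp ((∑ j, (c j) ^ 2) / 2) := by
  simp_rw [Real.exp_sum]
  rw [pi_integral (fun j t => Real.exp (c j * t))]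
  simp_rw [integral_exp_gaussian]
  rw [← Real.exp_sum, Finset.sum_div]

lemma integrable_exp_sum :
    Integrable (fun x => Real.exp (∑ j, c j * x j)) (stdGaussian d) := by
  simp_rw [Real.exp_sum]
  exact pi_integrable (fun j t => Real.exp (c j * t)) (fun j => integrable_exp_gaussian (c j))

lemma measurable_lin : Measurable (fun x : Fin d → ℝ => ∑ j, c j * x j) :=
  Finset.measurable_sum _ (fun j _ => (measurable_pi_apply (X := fun _ : Fin d => ℝ) j).const_mul (c j))

lemma prod_two_ne {j k : Fin d} (hjk : j ≠ k) (x : Fin d → ℝ) :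
    x j * x k = ∏ i, (if i = j then x i else if i = k then x i else 1) := by
  have h1 : ∏ i ∈ (Finset.univ.erase j).erase k,
      (if i = j then x i else if i = k then x i else 1) = 1 := by
    refine Finset.prod_eq_one fun i hi => ?_
    obtain ⟨hik, hi'⟩ := Finset.mem_erase.mp hi
    obtain ⟨hij, _⟩ := Finset.mem_erase.mp hi'
    simp [hij, hik]
  rw [← Finset.mul_prod_erase Finset.univ _ (Finset.mem_univ j),
    ← Finset.mul_prod_erase _ _ (Finset.mem_erase.mpr ⟨Ne.symm hjk, Finset.mem_univ k⟩), h1]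
  simp [hjk, Ne.symm hjk]

lemma prod_two_eq (j : Fin d) (x : Fin d → ℝ) :
    x j * x j = ∏ i, (if i = j then (x i) ^ 2 else 1) := by
  rw [Finset.prod_ite_eq' Finset.univ j (fun i => (x i) ^ 2)]
  simp [sq]

lemma integral_coord_mul (j k : Fin d) :
    ∫ x, x j * x k ∂(stdGaussian d) = if j = k then 1 else 0 := by
  by_cases hjk : j = k
  · subst hjk
    simp only [if_true]
    simp_rw [prod_two_eq j]
    have h := pi_integral (d := d) (fun i t => if i = j then t ^ 2 else 1)
    beta_reduce at h
    rw [h, Finset.prod_eq_single j]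
    · simp [integral_sq_gaussian]
    · intro i _ hij; simp [hij]
    · simp
  · simp only [hjk, if_false]
    simp_rw [prod_two_ne hjk]
    have h := pi_integral (d := d) (fun i t => if i = j then t else if i = k then t else 1)
    beta_reduce at h
    rw [h, Finset.prod_eq_zero (Finset.mem_univ j)]
    simp [integral_id_gaussian]

lemma integrable_coord_mul (j k : Fin d) :
    Integrable (fun x => x j * x k) (stdGaussian d) := by
  by_cases hjk : j = k
  · subst hjk
    simp_rw [prod_two_eq j]
    have key := pi_integrable (d := d) (fun i t => if i = j then t ^ 2 else 1)
      (fun i => by by_cases hij : i = j <;>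
        simp [hij, integrable_sq_gaussian, integrable_const])
    beta_reduce at key
    exact key
  · simp_rw [prod_two_ne hjk]
    have key := pi_integrable (d := d) (fun i t => if i = j then t else if i = k then t else 1)
      (fun i => by
        by_cases hij : i = j
        · simp [hij, integrable_id_gaussian]
        · by_cases hik : i = k <;>
            simp [hij, hik, integrable_id_gaussian, integrable_const])
    beta_reduce at key
    exact key

lemma integral_sq_sum :
    ∫ x, (∑ j, c j * x j) ^ 2 ∂(stdGaussian d) = ∑ j, (c j) ^ 2 := by
  have hexp : ∀ x : Fin d → ℝ, (∑ j, c j * x j) ^ 2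
      = ∑ j, ∑ k, (c j * c k) * (x j * x k) := by
    intro x
    rw [sq, Finset.sum_mul_sum]
    congr 1; ext j; congr 1; ext k; ring
  simp_rw [hexp]
  rw [integral_finset_sum _ (fun j _ => integrable_finset_sum _
    (fun k _ => ((integrable_coord_mul j k).const_mul _)))]
  have : ∀ j : Fin d, ∫ x, ∑ k, (c j * c k) * (x j * x k) ∂(stdGaussian d) = (c j) ^ 2 := by
    intro j
    rw [integral_finset_sum _ (fun k _ => ((integrable_coord_mul j k).const_mul _))]
    have h2 : ∀ k : Fin d, ∫ x, (c j * c k) * (x j * x k) ∂(stdGaussian d)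
        = (c j * c k) * if j = k then 1 else 0 := by
      intro k
      rw [integral_const_mul, integral_coord_mul]
    simp_rw [h2]
    simp [mul_ite, Finset.sum_ite_eq, sq]
  simp_rw [this]

lemma integrable_sq_sum :
    Integrable (fun x => (∑ j, c j * x j) ^ 2) (stdGaussian d) := by
  have hexp : ∀ x : Fin d → ℝ, (∑ j, c j * x j) ^ 2
      = ∑ j, ∑ k, (c j * c k) * (x j * x k) := by
    intro x
    rw [sq, Finset.sum_mul_sum]
    congr 1; ext j; congr 1; ext k; ring
  simp_rw [hexp]
  exact integrable_finset_sum _ (fun j _ => integrable_finset_sum _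
    (fun k _ => ((integrable_coord_mul j k).const_mul _)))
lemma pow_abs_le_exp (x : ℝ) (p : ℕ) :
    |x| ^ p ≤ (p.factorial : ℝ) * (Real.exp x + Real.exp (-x)) := by
  have hfac : (0:ℝ) < p.factorial := by exact_mod_cast p.factorial_pos
  have h1 : |x| ^ p / (p.factorial : ℝ) ≤ Real.exp |x| := by
    have hsum := Real.sum_le_exp_of_nonneg (abs_nonneg x) (p + 1)
    have hterm : |x| ^ p / (p.factorial : ℝ) ≤ ∑ i ∈ Finset.range (p+1), |x| ^ i / i.factorial :=
      Finset.single_le_sum (f := fun i => |x| ^ i / (i.factorial : ℝ))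
        (fun i _ => by positivity) (Finset.self_mem_range_succ p)
    linarith
  have h2 : Real.exp |x| ≤ Real.exp x + Real.exp (-x) := by
    rcases abs_cases x with ⟨h, _⟩ | ⟨h, _⟩ <;> rw [h] <;>
      nlinarith [Real.exp_pos x, Real.exp_pos (-x)]
  calc |x| ^ p = (p.factorial : ℝ) * (|x| ^ p / (p.factorial : ℝ)) := by field_simp
    _ ≤ (p.factorial : ℝ) * (Real.exp x + Real.exp (-x)) := by
        have := h1.trans h2
        exact mul_le_mul_of_nonneg_left this hfac.le

variable {d : ℕ} (c : Fin d → ℝ)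

lemma exp_sum_bound (p : ℕ) {t : ℝ} (ht : 0 ≤ t) (x : Fin d → ℝ) :
    |∑ j, c j * x j| ^ p * t ^ p ≤
      (p.factorial : ℝ) * (Real.exp (∑ j, (t * c j) * x j) + Real.exp (∑ j, (-(t * c j)) * x j)) := by
  have hz := pow_abs_le_exp (t * ∑ j, c j * x j) p
  have h1 : ∑ j, (t * c j) * x j = t * ∑ j, c j * x j := by
    rw [Finset.mul_sum]; exact Finset.sum_congr rfl fun j _ => by ring
  have h2 : ∑ j, (-(t * c j)) * x j = -(t * ∑ j, c j * x j) := by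
    rw [← h1, ← Finset.sum_neg_distrib]
    exact Finset.sum_congr rfl fun j _ => by ring
  rw [h1, h2]
  calc |∑ j, c j * x j| ^ p * t ^ p = |t * ∑ j, c j * x j| ^ p := by
        rw [abs_mul, mul_pow, abs_of_nonneg ht]; ring
    _ ≤ _ := hz

lemma integrable_pow_sum (p : ℕ) :
    Integrable (fun x => (∑ j, c j * x j) ^ p) (stdGaussian d) := by
  refine Integrable.mono' (((integrable_exp_sum c).add (integrable_exp_sum (fun j => -c j))).const_mul
    (p.factorial : ℝ)) ((measurable_lin c).pow_const p).aestronglyMeasurable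
    (Filter.Eventually.of_forall fun x => ?_)
  have h2 : ∑ j, (-c j) * x j = -(∑ j, c j * x j) := by
    rw [← Finset.sum_neg_distrib]; congr 1; ext j; ring
  simp only [Pi.add_apply]
  rw [Real.norm_eq_abs, abs_pow, h2]
  calc |∑ j, c j * x j| ^ p ≤ (p.factorial : ℝ)
        * (Real.exp (∑ j, c j * x j) + Real.exp (-∑ j, c j * x j)) :=
      pow_abs_le_exp _ p
    _ = _ := rfl

lemma moment_bound (m : ℕ) (hm : 1 ≤ m) (hv : 0 < ∑ j, (c j) ^ 2) :
    ∫ x, (∑ j, c j * x j) ^ (2 * m) ∂(stdGaussian d)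
      ≤ 2 * (2 * Real.exp 1 * m * ∑ j, (c j) ^ 2) ^ m := by
  set v := ∑ j, (c j) ^ 2 with hvdef
  have hmR : (0:ℝ) < m := by exact_mod_cast hm
  have htpos : 0 < Real.sqrt (2 * m / v) := Real.sqrt_pos.mpr (by positivity)
  set t := Real.sqrt (2 * m / v) with htdef
  have ht2 : t ^ 2 = 2 * m / v := Real.sq_sqrt (by positivity)
  have hK : (0:ℝ) < t ^ (2 * m) := pow_pos htpos _
  -- pointwise bound
  have hpoint : ∀ x : Fin d → ℝ, (∑ j, c j * x j) ^ (2 * m)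
      ≤ (((2 * m).factorial : ℝ) / t ^ (2 * m)) *
        (Real.exp (∑ j, (t * c j) * x j) + Real.exp (∑ j, (-(t * c j)) * x j)) := by
    intro x
    have heven : (∑ j, c j * x j) ^ (2 * m) = |∑ j, c j * x j| ^ (2 * m) := by
      rw [pow_abs, abs_of_nonneg ((even_two_mul m).pow_nonneg _)]
    rw [heven, div_mul_eq_mul_div, le_div_iff₀ hK]
    exact exp_sum_bound c (2 * m) htpos.le x
  -- integrate
  have hint : ∫ x, (∑ j, c j * x j) ^ (2 * m) ∂(stdGaussian d)
      ≤ ∫ x, (((2 * m).factorial : ℝ) / t ^ (2 * m)) *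
        (Real.exp (∑ j, (t * c j) * x j) + Real.exp (∑ j, (-(t * c j)) * x j)) ∂(stdGaussian d) :=
    integral_mono (integrable_pow_sum c (2 * m))
      (((integrable_exp_sum (fun j => t * c j)).add
        (integrable_exp_sum (fun j => -(t * c j)))).const_mul _) hpoint
  have hsum1 : ∑ j, (t * c j) ^ 2 = t ^ 2 * v := by
    rw [hvdef, Finset.mul_sum]; exact Finset.sum_congr rfl fun j _ => by ring
  have hsum2 : ∑ j, (-(t * c j)) ^ 2 = t ^ 2 * v := by
    rw [← hsum1]; exact Finset.sum_congr rfl fun j _ => by ring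
  have hval : ∫ x, (((2 * m).factorial : ℝ) / t ^ (2 * m)) *
        (Real.exp (∑ j, (t * c j) * x j) + Real.exp (∑ j, (-(t * c j)) * x j)) ∂(stdGaussian d)
      = (((2 * m).factorial : ℝ) / t ^ (2 * m)) * (2 * Real.exp m) := by
    rw [integral_const_mul, integral_add (integrable_exp_sum _) (integrable_exp_sum _),
      integral_exp_sum, integral_exp_sum, hsum1, hsum2, ht2]
    have : 2 * (m:ℝ) / v * v / 2 = m := by field_simp
    rw [this]
    ring
  have hfac : ((2 * m).factorial : ℝ) ≤ ((2 * m : ℕ) : ℝ) ^ (2 * m) := by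
    exact_mod_cast Nat.factorial_le_pow (2 * m)
  have hfinal : (((2 * m).factorial : ℝ) / t ^ (2 * m)) * (2 * Real.exp m)
      ≤ 2 * (2 * Real.exp 1 * m * v) ^ m := by
    have htpow : t ^ (2 * m) = (2 * m / v) ^ m := by rw [pow_mul, ht2]
    have hexpm : Real.exp m = Real.exp 1 ^ m := by
      rw [← Real.exp_nat_mul, mul_one]
    rw [htpow, hexpm]
    have hb : (0:ℝ) < (2 * m / v) ^ m := by positivity
    rw [div_mul_eq_mul_div, div_le_iff₀ hb]
    have hcast : ((2 * m : ℕ) : ℝ) = 2 * m := by push_cast; ring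
    calc ((2 * m).factorial : ℝ) * (2 * Real.exp 1 ^ m)
        ≤ (2 * (m:ℝ)) ^ (2 * m) * (2 * Real.exp 1 ^ m) := by
          have := hfac
          rw [hcast] at this
          exact mul_le_mul_of_nonneg_right this (by positivity)
      _ = 2 * (2 * Real.exp 1 * m * v) ^ m * (2 * m / v) ^ m := by
          have hbase : (2 * Real.exp 1 * (m:ℝ) * v) * (2 * m / v) = (2 * (m:ℝ)) ^ 2 * Real.exp 1 := by
            field_simp
          rw [pow_mul]
          calc ((2 * (m:ℝ)) ^ 2) ^ m * (2 * Real.exp 1 ^ m)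
              = 2 * (((2 * (m:ℝ)) ^ 2 * Real.exp 1) ^ m) := by rw [mul_pow]; ring
            _ = 2 * ((2 * Real.exp 1 * (m:ℝ) * v) * (2 * m / v)) ^ m := by rw [hbase]
            _ = 2 * (2 * Real.exp 1 * (m:ℝ) * v) ^ m * (2 * m / v) ^ m := by rw [mul_pow]; ring
  linarith [hint.trans_eq hval, hfinal]
def tscal (d : ℕ) (y : Fin d → ℝ) : ℝ :=
  if (∑ i, (y i) ^ 2) < (d : ℝ) - 0.1 * d then Real.sqrt ((d : ℝ) / ((d : ℝ) - 0.1 * d))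
  else if (d : ℝ) + 0.1 * d < (∑ i, (y i) ^ 2) then Real.sqrt ((d : ℝ) / ((d : ℝ) + 0.1 * d))
  else Real.sqrt d / Real.sqrt (∑ i, (y i) ^ 2)

lemma trunc_scal (d : ℕ) (u y : Fin d → ℝ) :
    ∑ i, u i * truncSign d (0.1 * d) y i = tscal d y * ∑ i, u i * y i := by
  unfold truncSign tscal spSign
  split_ifs with h1 h2
  · rw [Finset.mul_sum]; exact Finset.sum_congr rfl fun i _ => by ring
  · rw [Finset.mul_sum]; exact Finset.sum_congr rfl fun i _ => by ring
  · rw [Finset.mul_sum]; exact Finset.sum_congr rfl fun i _ => by ring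

lemma measurable_tscal (d : ℕ) : Measurable (tscal d) := by
  have hsum : Measurable (fun y : Fin d → ℝ => ∑ i, (y i) ^ 2) :=
    Finset.measurable_sum _ (fun i _ => (measurable_pi_apply i).pow_const 2)
  unfold tscal
  refine Measurable.ite (measurableSet_lt hsum measurable_const) measurable_const ?_
  refine Measurable.ite (measurableSet_lt measurable_const hsum) measurable_const ?_
  exact Measurable.div measurable_const (Real.continuous_sqrt.measurable.comp hsum)

lemma sum_sq_nonneg {d : ℕ} (y : Fin d → ℝ) : 0 ≤ ∑ i, (y i) ^ 2 :=
  Finset.sum_nonneg fun i _ => sq_nonneg _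

lemma tscal_nonneg (d : ℕ) (y : Fin d → ℝ) : 0 ≤ tscal d y := by
  unfold tscal
  split_ifs <;> positivity

lemma tscal_sq_le {d : ℕ} (hd : 1 ≤ d) (y : Fin d → ℝ) : (tscal d y) ^ 2 ≤ 10 / 9 := by
  have hdR : (1:ℝ) ≤ d := by exact_mod_cast hd
  unfold tscal
  split_ifs with h1 h2
  · rw [Real.sq_sqrt (div_nonneg (by positivity) (by nlinarith))]
    rw [div_le_div_iff₀ (by nlinarith) (by norm_num)]
    nlinarith
  · rw [Real.sq_sqrt (by positivity)]
    rw [div_le_div_iff₀ (by nlinarith) (by norm_num)]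
    nlinarith
  · push_neg at h1
    have hS : (0:ℝ) < ∑ i, (y i) ^ 2 := by nlinarith
    rw [div_pow, Real.sq_sqrt (by positivity), Real.sq_sqrt hS.le]
    rw [div_le_div_iff₀ hS (by norm_num)]
    nlinarith

lemma tscal_sq_ge {d : ℕ} (hd : 1 ≤ d) (y : Fin d → ℝ) : 10 / 11 ≤ (tscal d y) ^ 2 := by
  have hdR : (1:ℝ) ≤ d := by exact_mod_cast hd
  unfold tscal
  split_ifs with h1 h2
  · rw [Real.sq_sqrt (div_nonneg (by positivity) (by nlinarith))]
    rw [div_le_div_iff₀ (by norm_num) (by nlinarith)]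
    nlinarith
  · rw [Real.sq_sqrt (by positivity)]
    rw [div_le_div_iff₀ (by norm_num) (by nlinarith)]
    nlinarith
  · push_neg at h1
    push_neg at h2
    have hS : (0:ℝ) < ∑ i, (y i) ^ 2 := by nlinarith
    rw [div_pow, Real.sq_sqrt (by positivity), Real.sq_sqrt hS.le]
    rw [div_le_div_iff₀ (by norm_num) hS]
    nlinarith


end AuxSubgaussian

/-- the truncated spatial sign of a Gaussian is O(1)-sub-Gaussian. -/
theorem truncated_spatial_sign_subgaussian :
    ∃ C' : ℝ, 0 < C' ∧
      ∀ (d : ℕ) (S : Matrix (Fin d) (Fin d) ℝ), S.PosDef →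
        ∀ (u : Fin d → ℝ) (p : ℕ), Even p → 0 < p →
          (∫ y, (∑ i, u i * truncSign d (0.1 * (d : ℝ)) y i) ^ p ∂(gaussianOf S))
              ^ ((p : ℝ)⁻¹)
            ≤ C' * Real.sqrt p *
              Real.sqrt (∫ y, (∑ i, u i * truncSign d (0.1 * (d : ℝ)) y i) ^ 2
                ∂(gaussianOf S)) := by
  refine ⟨10, by norm_num, fun d S _hS u p hpe hp0 => ?_⟩
  obtain ⟨m, hm⟩ := hpe
  have hp2m : p = 2 * m := by omega
  have hm1 : 1 ≤ m := by omega
  subst hp2m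
  -- nonnegativity of RHS pieces
  have hBnn : 0 ≤ ∫ y, (∑ i, u i * truncSign d (0.1 * (d : ℝ)) y i) ^ 2 ∂(gaussianOf S) :=
    integral_nonneg fun y => sq_nonneg _
  have hRHS : 0 ≤ 10 * Real.sqrt (((2 * m : ℕ)) : ℝ) * Real.sqrt
      (∫ y, (∑ i, u i * truncSign d (0.1 * (d : ℝ)) y i) ^ 2 ∂(gaussianOf S)) := by
    positivity
  have hpinv : ((((2 * m : ℕ)) : ℝ))⁻¹ ≠ 0 := inv_ne_zero (Nat.cast_ne_zero.mpr (by omega))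
  -- the case d = 0
  rcases Nat.eq_zero_or_pos d with hd0 | hd
  · subst hd0
    have hz : ∀ y : Fin 0 → ℝ, (∑ i, u i * truncSign 0 (0.1 * ((0:ℕ) : ℝ)) y i) ^ (2*m) = 0 :=
      fun y => by simp [zero_pow (by omega : 2*m ≠ 0)]
    simp_rw [hz]
    rw [integral_zero, Real.zero_rpow hpinv]
    exact hRHS
  -- now d ≥ 1
  -- the pushforward structure
  have hT : Measurable ((matSqrt S).mulVec) := by
    have hTe : (matSqrt S).mulVec = fun x i => ∑ j, matSqrt S i j * x j := by
      funext x i; rfl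
    rw [hTe]
    exact measurable_pi_lambda _ fun i =>
      Finset.measurable_sum _ fun j _ => (measurable_pi_apply j).const_mul _
  set T := (matSqrt S).mulVec with hTdef
  set c : Fin d → ℝ := fun j => ∑ i, u i * matSqrt S i j with hcdef
  have hTx : ∀ (x : Fin d → ℝ) i, T x i = ∑ j, matSqrt S i j * x j := fun x i => rfl
  have hlin : ∀ x : Fin d → ℝ, (∑ i, u i * T x i) = ∑ j, c j * x j := by
    intro x
    calc ∑ i, u i * T x i = ∑ i, ∑ j, u i * (matSqrt S i j * x j) := by
          refine Finset.sum_congr rfl fun i _ => ?_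
          rw [hTx, Finset.mul_sum]
      _ = ∑ j, ∑ i, u i * (matSqrt S i j * x j) := Finset.sum_comm
      _ = ∑ j, c j * x j := by
          refine Finset.sum_congr rfl fun j _ => ?_
          rw [hcdef]
          simp only []
          rw [Finset.sum_mul]
          exact Finset.sum_congr rfl fun i _ => by ring
  have hFmeas : Measurable (fun y : Fin d → ℝ => tscal d y * ∑ i, u i * y i) :=
    (measurable_tscal d).mul
      (Finset.measurable_sum _ fun i _ => (measurable_pi_apply i).const_mul _)
  -- change of variables
  have hmap : ∀ q : ℕ, (∫ y, (∑ i, u i * truncSign d (0.1 * (d : ℝ)) y i) ^ q ∂(gaussianOf S))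
      = ∫ x, (tscal d (T x) * ∑ j, c j * x j) ^ q ∂(stdGaussian d) := by
    intro q
    have h1 : (∫ y, (∑ i, u i * truncSign d (0.1 * (d : ℝ)) y i) ^ q ∂(gaussianOf S))
        = ∫ y, (tscal d y * ∑ i, u i * y i) ^ q ∂(gaussianOf S) := by
      refine integral_congr_ae (Filter.Eventually.of_forall fun y => ?_)
      beta_reduce
      rw [trunc_scal]
    rw [h1]
    have h2 : gaussianOf S = (stdGaussian d).map T := rfl
    rw [h2, integral_map hT.aemeasurable (hFmeas.pow_const q).aestronglyMeasurable]
    refine integral_congr_ae (Filter.Eventually.of_forall fun x => ?_)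
    beta_reduce
    rw [hlin]
  set v := ∑ j, (c j) ^ 2 with hvdef
  have hvnn : 0 ≤ v := Finset.sum_nonneg fun j _ => sq_nonneg _
  -- pointwise bounds
  have hpt_up : ∀ (x : Fin d → ℝ) (q : ℕ),
      (tscal d (T x) * ∑ j, c j * x j) ^ (2 * q)
        ≤ (10/9 : ℝ) ^ q * (∑ j, c j * x j) ^ (2 * q) := by
    intro x q
    have h1 : (tscal d (T x) * ∑ j, c j * x j) ^ (2 * q)
        = ((tscal d (T x)) ^ 2) ^ q * ((∑ j, c j * x j) ^ 2) ^ q := by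
      rw [mul_pow, pow_mul, pow_mul]
    rw [h1]
    have h2 : ((tscal d (T x)) ^ 2) ^ q ≤ (10/9 : ℝ) ^ q :=
      pow_le_pow_left₀ (sq_nonneg _) (tscal_sq_le hd (T x)) q
    rw [show (∑ j, c j * x j) ^ (2*q) = ((∑ j, c j * x j) ^ 2) ^ q from pow_mul _ 2 q]
    exact mul_le_mul_of_nonneg_right h2 (pow_nonneg (sq_nonneg _) q)
  have hGmeas : Measurable (fun x : Fin d → ℝ => tscal d (T x) * ∑ j, c j * x j) :=
    ((measurable_tscal d).comp hT).mul (measurable_lin c)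
  have hint_up : ∀ q : ℕ, Integrable
      (fun x => (tscal d (T x) * ∑ j, c j * x j) ^ (2 * q)) (stdGaussian d) := by
    intro q
    refine Integrable.mono' ((integrable_pow_sum c (2*q)).const_mul ((10/9:ℝ)^q))
      (hGmeas.pow_const (2*q)).aestronglyMeasurable
      (Filter.Eventually.of_forall fun x => ?_)
    rw [Real.norm_eq_abs, abs_of_nonneg ((even_two_mul q).pow_nonneg _)]
    exact hpt_up x q
  -- the lower bound for the second moment
  have hBint : Integrable (fun x => (tscal d (T x) * ∑ j, c j * x j) ^ 2) (stdGaussian d) := by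
    have h := hint_up 1
    simpa using h
  have hB2 : (10/11 : ℝ) * v ≤ ∫ x, (tscal d (T x) * ∑ j, c j * x j) ^ 2 ∂(stdGaussian d) := by
    have hpt : ∀ x : Fin d → ℝ, (10/11 : ℝ) * (∑ j, c j * x j) ^ 2
        ≤ (tscal d (T x) * ∑ j, c j * x j) ^ 2 := by
      intro x
      rw [mul_pow]
      exact mul_le_mul_of_nonneg_right (tscal_sq_ge hd (T x)) (sq_nonneg _)
    calc (10/11 : ℝ) * v = ∫ x, (10/11 : ℝ) * (∑ j, c j * x j) ^ 2 ∂(stdGaussian d) := by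
          rw [integral_const_mul, integral_sq_sum]
      _ ≤ _ := integral_mono ((integrable_sq_sum c).const_mul _) hBint hpt
  rw [hmap (2*m), hmap 2]
  set B := ∫ x, (tscal d (T x) * ∑ j, c j * x j) ^ 2 ∂(stdGaussian d) with hBdef
  have hBnn' : 0 ≤ B := integral_nonneg fun x => sq_nonneg _
  have hRHS' : 0 ≤ 10 * Real.sqrt (((2 * m : ℕ)) : ℝ) * Real.sqrt B := by positivity
  have hAnn : 0 ≤ ∫ x, (tscal d (T x) * ∑ j, c j * x j) ^ (2*m) ∂(stdGaussian d) :=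
    integral_nonneg fun x => (even_two_mul m).pow_nonneg _
  -- case v = 0
  rcases eq_or_lt_of_le hvnn with hv0 | hv
  · have hc0 : ∀ j, c j = 0 := by
      intro j
      have := (Finset.sum_eq_zero_iff_of_nonneg (fun j _ => sq_nonneg (c j))).mp hv0.symm
      exact pow_eq_zero_iff (two_ne_zero) |>.mp (this j (Finset.mem_univ j))
    have hZ0 : ∀ x : Fin d → ℝ, (tscal d (T x) * ∑ j, c j * x j) ^ (2*m) = 0 := by
      intro x
      have : ∑ j, c j * x j = 0 := Finset.sum_eq_zero fun j _ => by rw [hc0 j, zero_mul]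
      rw [this, mul_zero, zero_pow (by omega : 2*m ≠ 0)]
    simp_rw [hZ0]
    rw [integral_zero, Real.zero_rpow hpinv]
    exact hRHS'
  -- case v > 0
  have hM := moment_bound c m hm1 hv
  set K := (20/9 : ℝ) * Real.exp 1 * m * v with hKdef
  have hKnn : 0 ≤ K := by positivity
  have hAK : ∫ x, (tscal d (T x) * ∑ j, c j * x j) ^ (2*m) ∂(stdGaussian d) ≤ 2 * K ^ m := by
    calc ∫ x, (tscal d (T x) * ∑ j, c j * x j) ^ (2*m) ∂(stdGaussian d)
        ≤ ∫ x, (10/9:ℝ)^m * (∑ j, c j * x j) ^ (2*m) ∂(stdGaussian d) :=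
          integral_mono (hint_up m) ((integrable_pow_sum c (2*m)).const_mul _)
            (fun x => hpt_up x m)
      _ = (10/9:ℝ)^m * ∫ x, (∑ j, c j * x j) ^ (2*m) ∂(stdGaussian d) := integral_const_mul _ _
      _ ≤ (10/9:ℝ)^m * (2 * (2 * Real.exp 1 * m * v) ^ m) :=
          mul_le_mul_of_nonneg_left hM (by positivity)
      _ = 2 * K ^ m := by
          rw [show (10/9:ℝ)^m * (2 * (2 * Real.exp 1 * m * v) ^ m)
            = 2 * ((10/9:ℝ)^m * (2 * Real.exp 1 * (m:ℝ) * v) ^ m) by ring, ← mul_pow]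
          rw [hKdef]
          congr 2
          ring
  -- rpow manipulations
  have hstep1 : (∫ x, (tscal d (T x) * ∑ j, c j * x j) ^ (2*m) ∂(stdGaussian d))
      ^ ((((2*m : ℕ)) : ℝ))⁻¹ ≤ (2 * K ^ m) ^ ((((2*m : ℕ)) : ℝ))⁻¹ :=
    Real.rpow_le_rpow hAnn hAK (by positivity)
  have hcast2m : (((2*m : ℕ)) : ℝ) = 2 * (m:ℝ) := by push_cast; ring
  have hstep2 : (2 * K ^ m) ^ ((((2*m : ℕ)) : ℝ))⁻¹
      = (2:ℝ) ^ ((((2*m : ℕ)) : ℝ))⁻¹ * Real.sqrt K := by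
    rw [Real.mul_rpow (by norm_num) (pow_nonneg hKnn m)]
    congr 1
    rw [← Real.rpow_natCast K m, ← Real.rpow_mul hKnn]
    rw [show (m:ℝ) * ((((2*m : ℕ)) : ℝ))⁻¹ = 1/2 by
      rw [hcast2m]; field_simp]
    exact (Real.sqrt_eq_rpow K).symm
  have hstep3 : (2:ℝ) ^ ((((2*m : ℕ)) : ℝ))⁻¹ ≤ 2 := by
    have h1 : ((((2*m : ℕ)) : ℝ))⁻¹ ≤ 1 := by
      rw [hcast2m]
      rw [inv_le_one_iff₀]
      right
      have : (1:ℝ) ≤ (m:ℝ) := by exact_mod_cast hm1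
      linarith
    calc (2:ℝ) ^ ((((2*m : ℕ)) : ℝ))⁻¹ ≤ (2:ℝ) ^ (1:ℝ) :=
        Real.rpow_le_rpow_of_exponent_le (by norm_num) h1
      _ = 2 := Real.rpow_one 2
  -- bound K
  have hvB : v ≤ (11/10 : ℝ) * B := by linarith
  have he3 : Real.exp 1 ≤ 3 := by
    have := Real.exp_one_lt_d9
    linarith
  have hmle : (m:ℝ) ≤ (((2*m : ℕ)) : ℝ) := by
    rw [hcast2m]
    have : (0:ℝ) ≤ (m:ℝ) := Nat.cast_nonneg m
    linarith
  have hKle : K ≤ 25 * (((2*m : ℕ)) : ℝ) * B := by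
    calc K = (20/9 : ℝ) * Real.exp 1 * (m:ℝ) * v := rfl
      _ ≤ (20/9 : ℝ) * 3 * (((2*m : ℕ)) : ℝ) * ((11/10 : ℝ) * B) := by
          gcongr
          all_goals first
          | exact hvnn
          | exact he3
          | exact hmle
          | exact hvB
          | positivity
      _ = (22/3 : ℝ) * ((((2*m : ℕ)) : ℝ) * B) := by ring
      _ ≤ 25 * ((((2*m : ℕ)) : ℝ) * B) := by
          have hx : (0:ℝ) ≤ (((2*m : ℕ)) : ℝ) * B := mul_nonneg (Nat.cast_nonneg _) hBnn'
          nlinarith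
      _ = 25 * (((2*m : ℕ)) : ℝ) * B := by ring
  have hsqrtK : Real.sqrt K ≤ 5 * (Real.sqrt (((2*m : ℕ)) : ℝ) * Real.sqrt B) := by
    have h1 : Real.sqrt K ≤ Real.sqrt (25 * (((2*m : ℕ)) : ℝ) * B) := Real.sqrt_le_sqrt hKle
    rw [show (25 : ℝ) * (((2*m : ℕ)) : ℝ) * B = 5^2 * ((((2*m : ℕ)) : ℝ) * B) by ring,
      Real.sqrt_mul (by norm_num : (0:ℝ) ≤ 5^2) ((((2*m : ℕ)) : ℝ) * B),
      Real.sqrt_sq (by norm_num : (0:ℝ) ≤ 5),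
      Real.sqrt_mul (Nat.cast_nonneg _) B] at h1
    exact h1
  have hsqrtKnn : 0 ≤ Real.sqrt K := Real.sqrt_nonneg K
  calc (∫ x, (tscal d (T x) * ∑ j, c j * x j) ^ (2*m) ∂(stdGaussian d))
      ^ ((((2*m : ℕ)) : ℝ))⁻¹ ≤ (2 * K ^ m) ^ ((((2*m : ℕ)) : ℝ))⁻¹ := hstep1
    _ = (2:ℝ) ^ ((((2*m : ℕ)) : ℝ))⁻¹ * Real.sqrt K := hstep2
    _ ≤ 2 * Real.sqrt K := mul_le_mul_of_nonneg_right hstep3 hsqrtKnn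
    _ ≤ 2 * (5 * (Real.sqrt (((2*m : ℕ)) : ℝ) * Real.sqrt B)) :=
        mul_le_mul_of_nonneg_left hsqrtK (by norm_num)
    _ = 10 * Real.sqrt (((2*m : ℕ)) : ℝ) * Real.sqrt B := by ring

end Paper
end
end
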